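/- arXiv:2207.03924 — 5 statements merged into one kernel-verified Lean document; each statement's English description precedes it below -/
import Mathlib

section
/- Let G and G' be finite simple graphs without isolated vertices, on n and n' vertices respectively, and let t', t'' ∈ ℕ. Assume G' ≼[t'] G and G ≼[t''] G' for the standard Laplacians, i.e. n ≥ n' − t'' and n' ≥ n − t', with λ_k(G') ≤ λ_{k+t'}(G) for all 1 ≤ k ≤ n − t' and λ_k(G) ≤ λ_{k+t''}(G') for all 1 ≤ k ≤ n' − t''. If λ is an eigenvalue of the standard Laplacian Δ_{G'} with multiplicity μ > t' + t'', then λ is an eigenvalue of the standard Laplacian Δ_G with multiplicity at least μ − (t' + t''). -/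
open scoped Classical

noncomputable section

/-- Degree of a vertex. -/
def deg {V : Type*} [Fintype V] (G : SimpleGraph V) (u : V) : ℕ :=
  Nat.card {v | G.Adj u v}

/-- Standard (normalised) Laplacian. -/
def stdLap {V : Type*} [Fintype V] (G : SimpleGraph V) : Matrix V V ℝ :=
  fun u v =>
    if u = v then 1
    else if G.Adj u v then -(1 / Real.sqrt ((deg G u : ℝ) * (deg G v : ℝ)))
    else 0

/-- Signless standard Laplacian. -/
def stdLapP {V : Type*} [Fintype V] (G : SimpleGraph V) : Matrix V V ℝ :=
  fun u v =>
    if u = v then 1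
    else if G.Adj u v then 1 / Real.sqrt ((deg G u : ℝ) * (deg G v : ℝ))
    else 0

/-- Spectrum (multiset of eigenvalues, with algebraic multiplicity). -/
def spec {V : Type*} [Fintype V] (G : SimpleGraph V) : Multiset ℝ :=
  (stdLap G).charpoly.roots

def specP {V : Type*} [Fintype V] (G : SimpleGraph V) : Multiset ℝ :=
  (stdLapP G).charpoly.roots

/-- `eig G k` is the k-th smallest eigenvalue (1-based). -/
def eig {V : Type*} [Fintype V] (G : SimpleGraph V) (k : ℕ) : ℝ :=
  ((spec G).sort (· ≤ ·)).getD (k - 1) 0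

def eigP {V : Type*} [Fintype V] (G : SimpleGraph V) (k : ℕ) : ℝ :=
  ((specP G).sort (· ≤ ·)).getD (k - 1) 0

end


lemma stdLap_isHermitian {V : Type*} [Fintype V] (G : SimpleGraph V) :
    (stdLap G).IsHermitian := by
  ext i j
  simp only [Matrix.conjTranspose_apply, star_trivial, stdLap]
  rcases eq_or_ne i j with rfl | h
  · simp
  · rw [if_neg (Ne.symm h), if_neg h, G.adj_comm, mul_comm]

open Polynomial Matrix in
lemma charpoly_conj_aux {n : Type*} [Fintype n] [DecidableEq n]
    (U D Vm : Matrix n n ℝ) (h1 : U * Vm = 1) (h2 : Vm * U = 1) :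
    (U * D * Vm).charpoly = D.charpoly := by
  have key : charmatrix (U * D * Vm)
      = (C : ℝ →+* ℝ[X]).mapMatrix U * charmatrix D * (C : ℝ →+* ℝ[X]).mapMatrix Vm := by
    rw [charmatrix, charmatrix, mul_sub, sub_mul]
    congr 1
    · rw [scalar_apply, ← smul_one_eq_diagonal, mul_smul_comm, smul_mul_assoc, mul_one,
        ← _root_.map_mul, h1, _root_.map_one (C.mapMatrix)]
    · simp [← _root_.map_mul, Matrix.mul_assoc]
  have h3 : (C : ℝ →+* ℝ[X]).mapMatrix Vm * (C : ℝ →+* ℝ[X]).mapMatrix U = 1 := by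
    rw [← _root_.map_mul, h2, _root_.map_one (C.mapMatrix)]
  rw [Matrix.charpoly, Matrix.charpoly, key, det_mul, det_mul, mul_comm, ← mul_assoc,
    ← det_mul, h3, det_one, one_mul]

open Polynomial Matrix in
lemma charpoly_diag_roots {n : Type*} [Fintype n] [DecidableEq n] (d : n → ℝ) :
    Multiset.card (Matrix.diagonal d).charpoly.roots = Fintype.card n := by
  have h : (Matrix.diagonal d).charpoly = ∏ i, (X - C (d i)) := by
    rw [Matrix.charpoly]
    have hc : charmatrix (Matrix.diagonal d) = Matrix.diagonal (fun i => X - C (d i)) := by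
      ext i j
      by_cases hij : i = j
      · subst hij; simp [charmatrix_apply_eq]
      · simp [charmatrix_apply_ne _ _ _ hij, Matrix.diagonal_apply_ne _ hij]
    rw [hc, det_diagonal]
  rw [h, Finset.prod_eq_multiset_prod,
    show Finset.univ.val.map (fun i => X - C (d i)) = (Finset.univ.val.map d).map (fun a => X - C a)
      by rw [Multiset.map_map]; rfl,
    Polynomial.roots_multiset_prod_X_sub_C]
  simp

lemma spec_card {V : Type*} [Fintype V] (G : SimpleGraph V) :
    Multiset.card (spec G) = Fintype.card V := by
  have hA := stdLap_isHermitian G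
  have hst := hA.spectral_theorem
  have hU1 := (Matrix.mem_unitaryGroup_iff).mp (Matrix.IsHermitian.eigenvectorUnitary hA).2
  have hU2 := (Matrix.mem_unitaryGroup_iff').mp (Matrix.IsHermitian.eigenvectorUnitary hA).2
  rw [spec, hst, Unitary.conjStarAlgAut_apply, charpoly_conj_aux _ _ _ hU1 hU2, charpoly_diag_roots]

lemma spec_card_le {V : Type*} [Fintype V] (G : SimpleGraph V) :
    Multiset.card (spec G) ≤ Fintype.card V := by
  rw [spec_card]

lemma sorted_rel_getElem {l : List ℝ} (hs : l.Pairwise (· ≤ ·)) {i j : ℕ}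
    (hij : i ≤ j) (hj : j < l.length) : l[i]'(lt_of_le_of_lt hij hj) ≤ l[j] := by
  have := hs.rel_get_of_le (a := ⟨i, lt_of_le_of_lt hij hj⟩) (b := ⟨j, hj⟩) hij
  simpa [List.get_eq_getElem] using this

lemma sorted_ge_of_filter_lt {l : List ℝ} (hs : l.Pairwise (· ≤ ·)) {x : ℝ} {i : ℕ}
    (hi : i < l.length) (ha : (l.filter (fun y => decide (y < x))).length ≤ i) :
    x ≤ l[i] := by
  by_contra hlt
  push_neg at hlt
  have hsub : List.Sublist (l.take (i+1)) l := List.take_sublist _ _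
  have hall : ∀ y ∈ l.take (i+1), y < x := by
    intro y hy
    obtain ⟨j, hj, hje⟩ := List.getElem_of_mem hy
    have hj1 : j < i + 1 := by
      have := hj; rw [List.length_take] at this; omega
    have hjl : j < l.length := by
      have := hj; rw [List.length_take] at this; omega
    have : y = l[j] := by
      rw [← hje, List.getElem_take]
    rw [this]
    exact lt_of_le_of_lt (sorted_rel_getElem hs (by omega) hi) hlt
  have heq : (l.take (i+1)).filter (fun y => decide (y < x)) = l.take (i+1) :=
    List.filter_eq_self.mpr (fun y hy => decide_eq_true (hall y hy))
  have hlen : i + 1 ≤ (l.filter (fun y => decide (y < x))).length := by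
    calc i + 1 = (l.take (i+1)).length := by rw [List.length_take]; omega
    _ = ((l.take (i+1)).filter (fun y => decide (y < x))).length := by rw [heq]
    _ ≤ _ := (hsub.filter _).length_le
  omega

lemma sorted_le_of_filter_le {l : List ℝ} (hs : l.Pairwise (· ≤ ·)) {x : ℝ} {i : ℕ}
    (hi : i < l.length) (ha : i < (l.filter (fun y => decide (y ≤ x))).length) :
    l[i] ≤ x := by
  by_contra hlt
  push_neg at hlt
  have hall : ∀ y ∈ l.drop i, ¬ (y ≤ x) := by
    intro y hy
    obtain ⟨j, hj, hje⟩ := List.getElem_of_mem hy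
    have hjl : i + j < l.length := by
      have := hj; rw [List.length_drop] at this; omega
    have : y = l[i + j] := by rw [← hje, List.getElem_drop]
    rw [this]
    exact not_le.mpr (lt_of_lt_of_le hlt (sorted_rel_getElem hs (by omega) hjl))
  have heq : (l.drop i).filter (fun y => decide (y ≤ x)) = [] :=
    List.filter_eq_nil_iff.mpr (fun y hy => by simpa using hall y hy)
  have hsplit : l.filter (fun y => decide (y ≤ x))
      = (l.take i).filter (fun y => decide (y ≤ x))
        ++ (l.drop i).filter (fun y => decide (y ≤ x)) := by
    rw [← List.filter_append, List.take_append_drop]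
  rw [hsplit, heq, List.append_nil] at ha
  have := List.length_filter_le (fun y => decide (y ≤ x)) (l.take i)
  rw [List.length_take] at this
  omega

lemma countP_le_split (x : ℝ) (l : List ℝ) :
    l.countP (fun y => decide (y ≤ x)) = l.countP (fun y => decide (y < x)) + l.count x := by
  induction l with
  | nil => simp
  | cons a l ih =>
    rw [List.countP_cons, List.countP_cons, List.count_cons]
    rcases lt_trichotomy a x with h | h | h
    · simp [h, le_of_lt h, h.ne]
      omega
    · subst h; simp
      omega
    · simp [not_le.mpr h, not_lt.mpr (le_of_lt h), h.ne']
      omega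

/-- stability of eigenvalue multiplicity under two-sided
spectral bracketing (Proposition `mult.spec`). -/
theorem stmt_0 {V V' : Type*} [Fintype V] [Fintype V']
    (G : SimpleGraph V) (G' : SimpleGraph V')
    (hG : ∀ v, 0 < deg G v) (hG' : ∀ v, 0 < deg G' v)
    (t' t'' : ℕ)
    (hcard1 : Fintype.card V ≥ Fintype.card V' - t'')
    (hcard2 : Fintype.card V' ≥ Fintype.card V - t')
    (hle1 : ∀ k, 1 ≤ k → k ≤ Fintype.card V - t' → eig G' k ≤ eig G (k + t'))
    (hle2 : ∀ k, 1 ≤ k → k ≤ Fintype.card V' - t'' → eig G k ≤ eig G' (k + t''))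
    (lam : ℝ) (μ : ℕ)
    (hmult : (spec G').count lam = μ) (hμ : t' + t'' < μ) :
    μ - (t' + t'') ≤ (spec G).count lam := by
  classical
  set l : List ℝ := (spec G').sort (· ≤ ·) with hl
  set l' : List ℝ := (spec G).sort (· ≤ ·) with hl'
  have hsl : l.Pairwise (· ≤ ·) := Multiset.pairwise_sort _ _
  have hsl' : l'.Pairwise (· ≤ ·) := Multiset.pairwise_sort _ _
  have hLl : l.length ≤ Fintype.card V' := by
    rw [hl, Multiset.length_sort]; exact spec_card_le G'
  have hLl' : l'.length = Fintype.card V := by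
    rw [hl', Multiset.length_sort, spec_card]
  have hcl : l.count lam = μ := by
    rw [hl, ← Multiset.coe_count, Multiset.sort_eq]; exact hmult
  set a := (l.filter (fun y => decide (y < lam))).length with ha
  have hfle : (l.filter (fun y => decide (y ≤ lam))).length = a + μ := by
    rw [← List.countP_eq_length_filter, countP_le_split, ha, ← List.countP_eq_length_filter, hcl]
  have hfll : (l.filter (fun y => decide (y ≤ lam))).length ≤ l.length :=
    List.length_filter_le _ _
  have haμ : a + μ ≤ Fintype.card V' := by omega
  have hlval : ∀ i, a ≤ i → i < a + μ → ∃ hi : i < l.length, l[i] = lam := by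
    intro i h1 h2
    have hi : i < l.length := by omega
    refine ⟨hi, le_antisymm ?_ ?_⟩
    · exact sorted_le_of_filter_le hsl hi (by omega)
    · exact sorted_ge_of_filter_lt hsl hi (by omega)
  have heig' : ∀ k, a + 1 ≤ k → k ≤ a + μ → eig G' k = lam := by
    intro k h1 h2
    obtain ⟨hi, hv⟩ := hlval (k - 1) (by omega) (by omega)
    rw [eig, ← hl, List.getD_eq_getElem l 0 hi, hv]
  set m := μ - (t' + t'') with hm
  have key : ∀ c, c < m → ∃ h : a + t' + c < l'.length, l'[a + t' + c] = lam := by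
    intro c hc
    have hidx : a + t' + c + 1 + t'' ≤ a + μ := by omega
    have hjV : a + t' + c + 1 ≤ Fintype.card V := by omega
    have h1 : eig G' (a + c + 1) = lam := heig' _ (by omega) (by omega)
    have e1 : lam ≤ eig G (a + t' + c + 1) := by
      have := hle1 (a + c + 1) (by omega) (by omega)
      rw [h1] at this
      convert this using 2
      omega
    have h2 : eig G' (a + t' + c + 1 + t'') = lam := heig' _ (by omega) (by omega)
    have e2 : eig G (a + t' + c + 1) ≤ lam := by
      have := hle2 (a + t' + c + 1) (by omega) (by omega)
      rwa [h2] at this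
    have heq : eig G (a + t' + c + 1) = lam := le_antisymm e2 e1
    have hi : a + t' + c < l'.length := by omega
    refine ⟨hi, ?_⟩
    rw [eig, ← hl'] at heq
    rwa [show a + t' + c + 1 - 1 = a + t' + c from rfl, List.getD_eq_getElem l' 0 hi] at heq
  have hmlen : a + t' + m ≤ l'.length := by omega
  have hrepl : (l'.drop (a + t')).take m = List.replicate m lam := by
    apply List.eq_replicate_iff.mpr
    constructor
    · rw [List.length_take, List.length_drop]; omega
    · intro y hy
      obtain ⟨c, hcl2, hce⟩ := List.getElem_of_mem hy
      have hcm : c < m := by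
        have := hcl2
        rw [List.length_take, List.length_drop] at this
        omega
      obtain ⟨hlt, hval⟩ := key c hcm
      rw [← hce, List.getElem_take, List.getElem_drop]
      exact hval
  have hsub : List.Sublist (List.replicate m lam) l' := by
    rw [← hrepl]
    exact (List.take_sublist _ _).trans (List.drop_sublist _ _)
  have hcount : m ≤ l'.count lam := by
    have := hsub.count_le lam
    rwa [List.count_replicate_self] at this
  have : (spec G).count lam = l'.count lam := by
    rw [hl', ← Multiset.coe_count, Multiset.sort_eq]
  omega
end

section
/- Let r ≥ 2 and let K̂_r be the graph on 2r vertices obtained from the complete graph K_r by attaching a pendant edge to each of its r vertices. Then both (2r + 1 − √(4r+1))/(2r) and (2r + 1 + √(4r+1))/(2r) are eigenvalues of the standard Laplacian Δ_{K̂_r}, each with multiplicity at least r − 1. -/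
open scoped Classical

/-- `hatK r` is the complete graph `K_r` (vertices `.inl i`) with a pendant
vertex `.inr i` attached to each vertex `.inl i`. -/
def hatK (r : ℕ) : SimpleGraph (Fin r ⊕ Fin r) where
  Adj x y :=
    match x, y with
    | .inl i, .inl j => i ≠ j
    | .inl i, .inr j => i = j
    | .inr i, .inl j => i = j
    | .inr _, .inr _ => False
  symm := by
    constructor
    rintro (i | i) (j | j) h
    · exact h.symm
    · exact h.symm
    · exact h.symm
    · exact h
  loopless := by
    constructor
    rintro (i | i) h
    · exact h rfl
    · exact h


section AuxCharpoly
open Polynomial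

lemma charpoly_sub_smul_one {n : Type*} [Fintype n] [DecidableEq n]
    (A : Matrix n n ℝ) (μ : ℝ) :
    A.charpoly.comp (X + C μ) = (A - μ • 1).charpoly := by
  let f : ℝ[X] →+* ℝ[X] := eval₂RingHom C (X + C μ)
  have hdet : A.charpoly.comp (X + C μ) = ((Matrix.charmatrix A).map f).det := by
    rw [show (Matrix.charmatrix A).map ⇑f = f.mapMatrix (Matrix.charmatrix A) from rfl,
      ← RingHom.map_det]
    rfl
  rw [hdet, Matrix.charpoly]
  congr 1
  ext i j
  by_cases h : i = j
  · subst h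
    simp [f, Matrix.charmatrix_apply_eq, Matrix.sub_apply, Matrix.smul_apply, Matrix.one_apply,
      map_sub, eval₂_sub]
    ring
  · simp [f, Matrix.charmatrix_apply_ne _ _ _ h, Matrix.sub_apply, Matrix.smul_apply,
      Matrix.one_apply_ne h, h]

lemma count_charpoly_roots_ge {n : Type*} [Fintype n] [DecidableEq n]
    (A : Matrix n n ℝ) (μ : ℝ) (d : ℕ)
    (hd : d ≤ Module.finrank ℝ (LinearMap.ker ((A - μ • 1).mulVecLin))) :
    d ≤ A.charpoly.roots.count μ := by
  classical
  rw [count_roots, rootMultiplicity_eq_natTrailingDegree, charpoly_sub_smul_one]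
  have hch : (Matrix.toLin' (A - μ • 1)).charpoly = (A - μ • 1).charpoly := by
    rw [← LinearMap.charpoly_toMatrix (Matrix.toLin' (A - μ • 1)) (Pi.basisFun ℝ n),
      LinearMap.toMatrix_eq_toMatrix', LinearMap.toMatrix'_toLin']
  rw [← hch, ← LinearMap.finrank_maxGenEigenspace_zero_eq]
  have htl : Matrix.toLin' (A - μ • 1) = (A - μ • 1).mulVecLin := Matrix.toLin'_apply' _
  rw [htl]
  refine hd.trans (Submodule.finrank_mono ?_)
  intro x hx
  rw [Module.End.mem_maxGenEigenspace]
  exact ⟨1, by simpa [LinearMap.mem_ker] using hx⟩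

end AuxCharpoly

lemma hatK_adj_inl_inl (r : ℕ) (i j : Fin r) : (hatK r).Adj (.inl i) (.inl j) ↔ i ≠ j := Iff.rfl
lemma hatK_adj_inl_inr (r : ℕ) (i j : Fin r) : (hatK r).Adj (.inl i) (.inr j) ↔ i = j := Iff.rfl
lemma hatK_adj_inr_inl (r : ℕ) (i j : Fin r) : (hatK r).Adj (.inr i) (.inl j) ↔ i = j := Iff.rfl
lemma hatK_adj_inr_inr (r : ℕ) (i j : Fin r) : ¬ (hatK r).Adj (.inr i) (.inr j) := fun h => h

lemma deg_split (r : ℕ) (u : Fin r ⊕ Fin r) :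
    deg (hatK r) u = Nat.card {j : Fin r // (hatK r).Adj u (.inl j)}
      + Nat.card {j : Fin r // (hatK r).Adj u (.inr j)} := by
  rw [deg]
  have h : Nat.card ↑{v | (hatK r).Adj u v}
      = Nat.card ({j : Fin r // (hatK r).Adj u (.inl j)} ⊕ {j : Fin r // (hatK r).Adj u (.inr j)}) :=
    Nat.card_congr (Equiv.subtypeSum (p := fun v => (hatK r).Adj u v))
  rw [h, Nat.card_sum]

lemma deg_inl (r : ℕ) (hr : 1 ≤ r) (i : Fin r) : deg (hatK r) (Sum.inl i) = r := by
  rw [deg_split]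
  have h1 : Nat.card {j : Fin r // (hatK r).Adj (.inl i) (.inl j)} = r - 1 := by
    simp only [Nat.card_eq_fintype_card]
    have : Fintype.card {j : Fin r // i ≠ j} = r - 1 := by
      rw [Fintype.card_subtype_compl, Fintype.card_subtype_eq', Fintype.card_fin]
    convert this using 2
    rfl
  have h2 : Nat.card {j : Fin r // (hatK r).Adj (.inl i) (.inr j)} = 1 := by
    simp only [Nat.card_eq_fintype_card]
    have : Fintype.card {j : Fin r // i = j} = 1 := Fintype.card_subtype_eq' i
    convert this using 2
    rfl
  rw [h1, h2]
  omega

lemma deg_inr (r : ℕ) (i : Fin r) : deg (hatK r) (Sum.inr i) = 1 := by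
  rw [deg_split]
  have h1 : Nat.card {j : Fin r // (hatK r).Adj (.inr i) (.inl j)} = 1 := by
    simp only [Nat.card_eq_fintype_card]
    have : Fintype.card {j : Fin r // i = j} = 1 := Fintype.card_subtype_eq' i
    convert this using 2
    rfl
  have h2 : Nat.card {j : Fin r // (hatK r).Adj (.inr i) (.inr j)} = 0 := by
    simp only [Nat.card_eq_fintype_card]
    have : Fintype.card {j : Fin r // False} = 0 := by simp
    convert this using 2
    rfl
  rw [h1, h2]

section entries
variable (r : ℕ) (hr : 2 ≤ r)

lemma sqrt_rr (hr : 2 ≤ r) : Real.sqrt ((r:ℝ) * (r:ℝ)) = (r:ℝ) :=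
  Real.sqrt_mul_self (by positivity)

lemma stdLap_inl_inl (hr : 2 ≤ r) (i j : Fin r) :
    stdLap (hatK r) (Sum.inl i) (Sum.inl j) = if i = j then 1 else -(1/(r:ℝ)) := by
  by_cases h : i = j
  · subst h; simp [stdLap]
  · have hadj : (hatK r).Adj (.inl i) (.inl j) := h
    rw [stdLap, if_neg (by simp [h]), if_pos hadj, deg_inl r (by omega), deg_inl r (by omega),
      sqrt_rr r hr, if_neg h]

lemma stdLap_inl_inr (hr : 2 ≤ r) (i j : Fin r) :
    stdLap (hatK r) (Sum.inl i) (Sum.inr j) =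
      if i = j then -(1/Real.sqrt (r:ℝ)) else 0 := by
  by_cases h : i = j
  · subst h
    have hadj : (hatK r).Adj (.inl i) (.inr i) := rfl
    rw [stdLap, if_neg (by simp), if_pos hadj, deg_inl r (by omega), deg_inr, if_pos rfl]
    norm_num
  · have hadj : ¬ (hatK r).Adj (.inl i) (.inr j) := h
    rw [stdLap, if_neg (by simp), if_neg hadj, if_neg h]

lemma stdLap_inr_inl (hr : 2 ≤ r) (i j : Fin r) :
    stdLap (hatK r) (Sum.inr i) (Sum.inl j) =
      if i = j then -(1/Real.sqrt (r:ℝ)) else 0 := by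
  by_cases h : i = j
  · subst h
    have hadj : (hatK r).Adj (.inr i) (.inl i) := rfl
    rw [stdLap, if_neg (by simp), if_pos hadj, deg_inr, deg_inl r (by omega), if_pos rfl]
    norm_num
  · have hadj : ¬ (hatK r).Adj (.inr i) (.inl j) := h
    rw [stdLap, if_neg (by simp), if_neg hadj, if_neg h]

lemma stdLap_inr_inr (hr : 2 ≤ r) (i j : Fin r) :
    stdLap (hatK r) (Sum.inr i) (Sum.inr j) = if i = j then 1 else 0 := by
  by_cases h : i = j
  · subst h; simp [stdLap]
  · rw [stdLap, if_neg (by simp [h]), if_neg (hatK_adj_inr_inr r i j), if_neg h]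

end entries

open Module in
lemma kernel_finrank (r : ℕ) (hr : 2 ≤ r) (μ : ℝ)
    (hroot : (r:ℝ) * μ^2 - (2*(r:ℝ)+1)*μ + (r:ℝ) = 0) (hμ : μ ≠ 1) :
    (r : ℕ) - 1 ≤ finrank ℝ (LinearMap.ker ((stdLap (hatK r) - μ • 1).mulVecLin)) := by
  classical
  have hR : (0:ℝ) < (r:ℝ) := by
    have : (0:ℕ) < r := by omega
    exact_mod_cast this
  set sr : ℝ := Real.sqrt (r:ℝ) with hsrdef
  have hsr0 : 0 < sr := Real.sqrt_pos.mpr hR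
  have hsr2 : sr * sr = (r:ℝ) := Real.mul_self_sqrt hR.le
  have h1μ : (1:ℝ) - μ ≠ 0 := sub_ne_zero.mpr (Ne.symm hμ)
  set c : ℝ := 1/(sr*(1-μ)) with hcdef
  have hc1 : c * (1 - μ) - 1/sr = 0 := by
    rw [hcdef]; field_simp; ring
  have hkey : (1 - μ + 1/(r:ℝ)) - (1/sr) * c = 0 := by
    have h2 : (1/sr) * c = 1/((r:ℝ)*(1-μ)) := by
      rw [hcdef, ← hsr2]; field_simp
    rw [h2]
    field_simp
    linear_combination hroot
  -- the embedding of sum-zero vectors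
  let T : (Fin r → ℝ) →ₗ[ℝ] (Fin r ⊕ Fin r → ℝ) :=
    { toFun := fun v => Sum.elim v (fun j => c * v j)
      map_add' := by intro v w; funext u; cases u <;> simp <;> ring
      map_smul' := by intro a v; funext u; cases u <;> simp <;> ring }
  have hT : Function.Injective T := by
    intro v w h
    funext j
    have := congrFun h (Sum.inl j)
    simpa [T] using this
  let sumF : (Fin r → ℝ) →ₗ[ℝ] ℝ := ∑ i : Fin r, LinearMap.proj i
  have hsumF : ∀ v : Fin r → ℝ, sumF v = ∑ i, v i := by
    intro v; simp [sumF]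
  have hS : finrank ℝ (LinearMap.ker sumF) = r - 1 := by
    have hsurj : Function.Surjective sumF := by
      intro x
      refine ⟨fun _ => x / (r:ℝ), ?_⟩
      rw [hsumF]
      rw [Finset.sum_const, Finset.card_univ, Fintype.card_fin, nsmul_eq_mul]
      field_simp
    have h := LinearMap.finrank_range_add_finrank_ker sumF
    rw [LinearMap.range_eq_top.mpr hsurj, finrank_top, finrank_self] at h
    have hpi : finrank ℝ (Fin r → ℝ) = r := by simp
    rw [hpi] at h
    omega
  have hmap : Submodule.map T (LinearMap.ker sumF) ≤ LinearMap.ker ((stdLap (hatK r) - μ • 1).mulVecLin) := by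
    rintro x ⟨v, hv, rfl⟩
    have hv' : ∑ i, v i = 0 := by
      have h' := hv
      rw [SetLike.mem_coe, LinearMap.mem_ker, hsumF] at h'
      exact h'
    rw [LinearMap.mem_ker, Matrix.mulVecLin_apply]
    funext u
    have expand : (stdLap (hatK r) - μ • 1).mulVec (T v) u
        = ∑ k : Fin r, (stdLap (hatK r) - μ • 1) u (Sum.inl k) * v k
          + ∑ k : Fin r, (stdLap (hatK r) - μ • 1) u (Sum.inr k) * (c * v k) := by
      simp [Matrix.mulVec, dotProduct, Fintype.sum_sum_type, T]
    show (stdLap (hatK r) - μ • 1).mulVec (T v) u = 0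
    rw [expand]
    cases u with
    | inl j =>
      have e1 : ∀ k, (stdLap (hatK r) - μ • 1) (Sum.inl j) (Sum.inl k)
          = -(1/(r:ℝ)) + (if j = k then (1 - μ + 1/(r:ℝ)) else 0) := by
        intro k
        rw [Matrix.sub_apply, Matrix.smul_apply, Matrix.one_apply, stdLap_inl_inl r hr]
        by_cases h : j = k
        · subst h; simp
        · simp [h]
      have e2 : ∀ k, (stdLap (hatK r) - μ • 1) (Sum.inl j) (Sum.inr k)
          = if j = k then -(1/sr) else 0 := by
        intro k
        rw [Matrix.sub_apply, Matrix.smul_apply, Matrix.one_apply, stdLap_inl_inr r hr]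
        simp [hsrdef]
      have s1 : ∑ k : Fin r, (stdLap (hatK r) - μ • 1) (Sum.inl j) (Sum.inl k) * v k
          = (1 - μ + 1/(r:ℝ)) * v j := by
        simp only [e1, add_mul, ite_mul, zero_mul, Finset.sum_add_distrib,
          Finset.sum_ite_eq, Finset.mem_univ, if_true]
        rw [← Finset.mul_sum, hv']
        ring
      have s2 : ∑ k : Fin r, (stdLap (hatK r) - μ • 1) (Sum.inl j) (Sum.inr k) * (c * v k)
          = -(1/sr) * (c * v j) := by
        simp only [e2, ite_mul, zero_mul, Finset.sum_ite_eq, Finset.mem_univ, if_true]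
      rw [s1, s2]
      linear_combination (v j) * hkey
    | inr j =>
      have e3 : ∀ k, (stdLap (hatK r) - μ • 1) (Sum.inr j) (Sum.inl k)
          = if j = k then -(1/sr) else 0 := by
        intro k
        rw [Matrix.sub_apply, Matrix.smul_apply, Matrix.one_apply, stdLap_inr_inl r hr]
        simp [hsrdef]
      have e4 : ∀ k, (stdLap (hatK r) - μ • 1) (Sum.inr j) (Sum.inr k)
          = if j = k then (1 - μ) else 0 := by
        intro k
        rw [Matrix.sub_apply, Matrix.smul_apply, Matrix.one_apply, stdLap_inr_inr r hr]
        by_cases h : j = k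
        · subst h; simp
        · simp [h]
      have s3 : ∑ k : Fin r, (stdLap (hatK r) - μ • 1) (Sum.inr j) (Sum.inl k) * v k
          = -(1/sr) * v j := by
        simp only [e3, ite_mul, zero_mul, Finset.sum_ite_eq, Finset.mem_univ, if_true]
      have s4 : ∑ k : Fin r, (stdLap (hatK r) - μ • 1) (Sum.inr j) (Sum.inr k) * (c * v k)
          = (1 - μ) * (c * v j) := by
        simp only [e4, ite_mul, zero_mul, Finset.sum_ite_eq, Finset.mem_univ, if_true]
      rw [s3, s4]
      linear_combination (v j) * hc1
  have heq : finrank ℝ (Submodule.map T (LinearMap.ker sumF)) = finrank ℝ (LinearMap.ker sumF) :=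
    (LinearEquiv.finrank_eq (Submodule.equivMapOfInjective T hT (LinearMap.ker sumF))).symm
  calc (r:ℕ) - 1 = finrank ℝ (LinearMap.ker sumF) := hS.symm
    _ = finrank ℝ (Submodule.map T (LinearMap.ker sumF)) := heq.symm
    _ ≤ finrank ℝ (LinearMap.ker ((stdLap (hatK r) - μ • 1).mulVecLin)) :=
        Submodule.finrank_mono hmap

/-- the numbers `(2r+1∓√(4r+1))/(2r)` are eigenvalues of the
standard Laplacian of `K̂_r`, each with multiplicity at least `r-1`. -/
theorem stmt_6 (r : ℕ) (hr : 2 ≤ r) :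
    r - 1 ≤ (spec (hatK r)).count
        ((2 * (r : ℝ) + 1 - Real.sqrt (4 * (r : ℝ) + 1)) / (2 * (r : ℝ))) ∧
    r - 1 ≤ (spec (hatK r)).count
        ((2 * (r : ℝ) + 1 + Real.sqrt (4 * (r : ℝ) + 1)) / (2 * (r : ℝ))) := by
  have hR : (0:ℝ) < (r:ℝ) := by
    have : (0:ℕ) < r := by omega
    exact_mod_cast this
  have hs0 : (0:ℝ) ≤ 4*(r:ℝ)+1 := by positivity
  have hs2 : Real.sqrt (4*(r:ℝ)+1) ^ 2 = 4*(r:ℝ)+1 := Real.sq_sqrt hs0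
  have hsnn : 0 ≤ Real.sqrt (4*(r:ℝ)+1) := Real.sqrt_nonneg _
  have hspec : spec (hatK r) = (stdLap (hatK r)).charpoly.roots := by
    have h : ∀ (i1 i2 : DecidableEq (Fin r ⊕ Fin r)),
        (@Matrix.charpoly ℝ _ (Fin r ⊕ Fin r) i1 _ (stdLap (hatK r))).roots
          = (@Matrix.charpoly ℝ _ (Fin r ⊕ Fin r) i2 _ (stdLap (hatK r))).roots := by
      intro i1 i2
      rw [Subsingleton.elim i1 i2]
    exact h _ _
  rw [hspec]
  constructor
  · have hroot : (r:ℝ) * ((2*(r:ℝ)+1-Real.sqrt (4*(r:ℝ)+1))/(2*(r:ℝ)))^2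
        - (2*(r:ℝ)+1)*((2*(r:ℝ)+1-Real.sqrt (4*(r:ℝ)+1))/(2*(r:ℝ))) + (r:ℝ) = 0 := by
      field_simp
      have hs2' : Real.sqrt ((r:ℝ)*4+1)^2 = (r:ℝ)*4+1 := by rw [mul_comm]; exact hs2
      linear_combination hs2'
    have hμ1 : (2*(r:ℝ)+1-Real.sqrt (4*(r:ℝ)+1))/(2*(r:ℝ)) ≠ 1 := by
      intro h
      rw [div_eq_one_iff_eq (by positivity)] at h
      have hs1 : Real.sqrt (4*(r:ℝ)+1) = 1 := by linarith
      rw [hs1] at hs2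
      norm_num at hs2
      linarith
    exact count_charpoly_roots_ge _ _ _ (kernel_finrank r hr _ hroot hμ1)
  · have hroot : (r:ℝ) * ((2*(r:ℝ)+1+Real.sqrt (4*(r:ℝ)+1))/(2*(r:ℝ)))^2
        - (2*(r:ℝ)+1)*((2*(r:ℝ)+1+Real.sqrt (4*(r:ℝ)+1))/(2*(r:ℝ))) + (r:ℝ) = 0 := by
      field_simp
      have hs2' : Real.sqrt ((r:ℝ)*4+1)^2 = (r:ℝ)*4+1 := by rw [mul_comm]; exact hs2
      linear_combination hs2'
    have hμ1 : (2*(r:ℝ)+1+Real.sqrt (4*(r:ℝ)+1))/(2*(r:ℝ)) ≠ 1 := by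
      intro h
      rw [div_eq_one_iff_eq (by positivity)] at h
      have hs1 : Real.sqrt (4*(r:ℝ)+1) = -1 := by linarith
      linarith
    exact count_charpoly_roots_ge _ _ _ (kernel_finrank r hr _ hroot hμ1)
end

section
/- Let A = (a_1,…,a_s) and B = (b_1,…,b_s) be two s-partitions of r ∈ ℕ (with s ≥ 2). Then the fuzzy ball graphs K̂_r(A) and K̂_r(B) are isospectral for the standard Laplacian: the multisets of eigenvalues of Δ_{K̂_r(A)} and Δ_{K̂_r(B)} coincide. -/
open scoped Classical

/-- The fuzzy ball `K̂_r(A)`: vertices `.inl i` (`i : Fin r`) form a complete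
graph, and the vertex `.inr j` (`j : Fin s`) is adjacent exactly to the `A j`
vertices `.inl i` with `a_1 + ⋯ + a_{j-1} ≤ i < a_1 + ⋯ + a_j` (0-based). -/
def fuzzyBall (r s : ℕ) (A : Fin s → ℕ) : SimpleGraph (Fin r ⊕ Fin s) where
  Adj x y :=
    match x, y with
    | .inl i, .inl j => i ≠ j
    | .inl i, .inr j =>
        (∑ k ∈ Finset.Iio j, A k) ≤ (i : ℕ) ∧ (i : ℕ) < ∑ k ∈ Finset.Iic j, A k
    | .inr j, .inl i =>
        (∑ k ∈ Finset.Iio j, A k) ≤ (i : ℕ) ∧ (i : ℕ) < ∑ k ∈ Finset.Iic j, A k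
    | .inr _, .inr _ => False
  symm := by
    constructor
    rintro (i | i) (j | j) h
    · exact h.symm
    · exact h
    · exact h
    · exact h
  loopless := by
    constructor
    rintro (i | i) h
    · exact h rfl
    · exact h

/-! ### Auxiliary material for the proof of `stmt_8`. -/

section Aux

open Matrix Finset
open scoped RealInnerProductSpace

/-- charpoly is invariant under similarity. -/
theorem charpoly_similar {n : Type*} [Fintype n] [DecidableEq n]
    (P Q M N : Matrix n n ℝ) (hPQ : P * Q = 1) (_hQP : Q * P = 1)
    (h : P * M = N * P) : M.charpoly = N.charpoly := by
  have hN : N = P * M * Q := by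
    rw [h, Matrix.mul_assoc, hPQ, Matrix.mul_one]
  classical
  set Pc := (Polynomial.C : ℝ →+* Polynomial ℝ).mapMatrix P with hPc
  set Qc := (Polynomial.C : ℝ →+* Polynomial ℝ).mapMatrix Q with hQc
  have h1 : Pc * Qc = 1 := by rw [hPc, hQc, ← _root_.map_mul, hPQ, _root_.map_one]
  have hc : ∀ (R : Matrix n n (Polynomial ℝ)),
      Matrix.scalar n (Polynomial.X : Polynomial ℝ) * R
      = R * Matrix.scalar n (Polynomial.X : Polynomial ℝ) := by
    intro R
    ext i j
    simp [Matrix.scalar, Matrix.mul_diagonal, Matrix.diagonal_mul, mul_comm]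
  have key : N.charmatrix = Pc * M.charmatrix * Qc := by
    rw [hN]
    unfold Matrix.charmatrix
    rw [Matrix.mul_sub, Matrix.sub_mul, _root_.map_mul, _root_.map_mul]
    congr 1
    rw [Matrix.mul_assoc, hc Qc, ← Matrix.mul_assoc, h1, Matrix.one_mul]
  have h2 : N.charpoly = Pc.det * M.charpoly * Qc.det := by
    rw [Matrix.charpoly, key, Matrix.det_mul, Matrix.det_mul, Matrix.charpoly]
  have h3 : Pc.det * Qc.det = 1 := by rw [← Matrix.det_mul, h1, Matrix.det_one]
  rw [h2]; ring_nf
  rw [mul_comm Pc.det, mul_assoc, h3, mul_one]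

lemma charpoly_irrel {n : Type*} [Fintype n] (i1 i2 : DecidableEq n) (M : Matrix n n ℝ) :
    @Matrix.charpoly ℝ _ n i1 _ M = @Matrix.charpoly ℝ _ n i2 _ M := by
  congr!

variable {r s : ℕ}

/-- Partial sum of `A` below `j`. -/
def psum {s : ℕ} (A : Fin s → ℕ) (j : Fin s) : ℕ := ∑ k ∈ Finset.Iio j, A k

/-- `i` lies in the `j`-th block. -/
def blk {s : ℕ} (A : Fin s → ℕ) (j : Fin s) (i : ℕ) : Prop :=
  psum A j ≤ i ∧ i < ∑ k ∈ Finset.Iic j, A k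

lemma sum_Iic_eq (A : Fin s → ℕ) (j : Fin s) :
    ∑ k ∈ Finset.Iic j, A k = psum A j + A j := by
  rw [psum, ← Finset.Iio_insert, Finset.sum_insert (by simp)]
  ring

lemma Iic_le_psum (A : Fin s → ℕ) {j j' : Fin s} (h : j < j') :
    ∑ k ∈ Finset.Iic j, A k ≤ psum A j' :=
  Finset.sum_le_sum_of_subset (fun k hk => by
    simp only [Finset.mem_Iic] at hk
    simp only [Finset.mem_Iio]
    exact lt_of_le_of_lt hk h)

lemma blk_uniq (A : Fin s → ℕ) {j j' : Fin s} {i : ℕ}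
    (h : blk A j i) (h' : blk A j' i) : j = j' := by
  by_contra hne
  rcases lt_or_gt_of_ne hne with hlt | hlt
  · have := lt_of_lt_of_le h.2 ((Iic_le_psum A hlt).trans h'.1); omega
  · have := lt_of_lt_of_le h'.2 ((Iic_le_psum A hlt).trans h.1); omega

lemma psum_zero (A : Fin s → ℕ) (h0 : 0 < s) : psum A ⟨0, h0⟩ = 0 := by
  rw [psum, Finset.sum_eq_zero_iff]
  intro k hk
  simp only [Finset.mem_Iio] at hk
  exact absurd hk (by simp [Fin.lt_def])

lemma sum_Iic_last (A : Fin s → ℕ) (h0 : 0 < s) :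
    ∑ k ∈ Finset.Iic ⟨s-1, by omega⟩, A k = ∑ k, A k := by
  congr 1
  ext k
  simp only [Finset.mem_Iic, Finset.mem_univ, iff_true, Fin.le_def]
  have := k.isLt
  omega

lemma blk_exists (A : Fin s → ℕ) {i r : ℕ} (hAr : ∑ j, A j = r) (hi : i < r) :
    ∃ j, blk A j i := by
  have h0 : 0 < s := by
    by_contra h
    have : s = 0 := by omega
    subst this
    simp at hAr; omega
  set T : Finset (Fin s) := Finset.univ.filter (fun j => i < ∑ k ∈ Finset.Iic j, A k) with hT
  have hTne : T.Nonempty := ⟨⟨s-1, by omega⟩, by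
    simp only [hT, Finset.mem_filter, Finset.mem_univ, true_and]
    rw [sum_Iic_last A h0, hAr]; exact hi⟩
  set j0 := T.min' hTne with hj0
  have hj0T : j0 ∈ T := T.min'_mem hTne
  have hupper : i < ∑ k ∈ Finset.Iic j0, A k := by
    simpa only [hT, Finset.mem_filter, Finset.mem_univ, true_and] using hj0T
  refine ⟨j0, ?_, hupper⟩
  by_cases hz : (j0 : ℕ) = 0
  · have : psum A j0 = 0 := by
      have : j0 = ⟨0, h0⟩ := by ext; exact hz
      rw [this]; exact psum_zero A h0
    omega
  · set j1 : Fin s := ⟨(j0 : ℕ) - 1, by have := j0.isLt; omega⟩ with hj1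
    have hlt : j1 < j0 := by simp [Fin.lt_def, hj1]; omega
    have hnotT : j1 ∉ T := fun h => absurd (T.min'_le j1 h) (not_le.mpr hlt)
    have hle : ∑ k ∈ Finset.Iic j1, A k ≤ i := by
      by_contra h
      exact hnotT (by simp only [hT, Finset.mem_filter, Finset.mem_univ, true_and]; omega)
    have : Finset.Iio j0 = Finset.Iic j1 := by
      ext k
      simp only [Finset.mem_Iio, Finset.mem_Iic, Fin.lt_def, Fin.le_def, hj1]
      omega
    rw [psum, this]
    exact hle

lemma blk_card (A : Fin s → ℕ) {r : ℕ} (hAr : ∑ j, A j = r) (j : Fin s) :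
    (Finset.univ.filter fun i : Fin r => blk A j (i : ℕ)).card = A j := by
  have hle : ∑ k ∈ Finset.Iic j, A k ≤ r := hAr ▸ Finset.sum_le_sum_of_subset (Finset.subset_univ _)
  rw [sum_Iic_eq] at hle
  have hmem : ∀ m ∈ Finset.Ico (psum A j) (psum A j + A j), m < r := by
    intro m hm; rw [Finset.mem_Ico] at hm; omega
  have : (Finset.univ.filter fun i : Fin r => blk A j (i : ℕ))
      = (Finset.Ico (psum A j) (psum A j + A j)).attachFin hmem := by
    ext i
    simp [blk, Finset.mem_attachFin, sum_Iic_eq]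
  rw [this, Finset.card_attachFin, Nat.card_Ico]
  omega

lemma adj_ll (A : Fin s → ℕ) (i k : Fin r) :
    (fuzzyBall r s A).Adj (.inl i) (.inl k) ↔ i ≠ k := Iff.rfl
lemma adj_lr (A : Fin s → ℕ) (i : Fin r) (j : Fin s) :
    (fuzzyBall r s A).Adj (.inl i) (.inr j) ↔ blk A j (i : ℕ) := Iff.rfl
lemma adj_rl (A : Fin s → ℕ) (i : Fin r) (j : Fin s) :
    (fuzzyBall r s A).Adj (.inr j) (.inl i) ↔ blk A j (i : ℕ) := Iff.rfl
lemma adj_rr (A : Fin s → ℕ) (j j' : Fin s) :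
    ¬ (fuzzyBall r s A).Adj (.inr j) (.inr j') := fun h => h

lemma deg_eq_card (G : SimpleGraph (Fin r ⊕ Fin s)) (u : Fin r ⊕ Fin s) :
    deg G u = Fintype.card {v // G.Adj u v} := by
  rw [deg, Nat.card_eq_fintype_card]
  rfl

lemma deg_inl_s8 (A : Fin s → ℕ) (hAr : ∑ j, A j = r) (i : Fin r) :
    deg (fuzzyBall r s A) (Sum.inl i) = r := by
  rw [deg_eq_card]
  rw [Fintype.card_congr (Equiv.subtypeSum (p := (fuzzyBall r s A).Adj (Sum.inl i)))]
  rw [Fintype.card_sum]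
  have h1 : Fintype.card {k : Fin r // (fuzzyBall r s A).Adj (.inl i) (.inl k)} = r - 1 := by
    have : Fintype.card {k : Fin r // ¬ (i = k)} = r - 1 := by
      rw [Fintype.card_subtype_compl]
      simp [Fintype.card_subtype_eq]
    rw [← this]
    apply Fintype.card_congr
    exact Equiv.subtypeEquivRight (fun k => Iff.rfl)
  have h2 : Fintype.card {j : Fin s // (fuzzyBall r s A).Adj (.inl i) (.inr j)} = 1 := by
    rw [Fintype.card_eq_one_iff]
    obtain ⟨j0, hj0⟩ := blk_exists A hAr i.isLt
    refine ⟨⟨j0, (adj_lr A i j0).mpr hj0⟩, ?_⟩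
    rintro ⟨j, hj⟩
    have := blk_uniq A ((adj_lr A i j).mp hj) hj0
    simp [this]
  rw [h1, h2]
  have := i.isLt
  omega

lemma deg_inr_s8 (A : Fin s → ℕ) (hAr : ∑ j, A j = r) (j : Fin s) :
    deg (fuzzyBall r s A) (Sum.inr j) = A j := by
  rw [deg_eq_card]
  rw [Fintype.card_congr (Equiv.subtypeSum (p := (fuzzyBall r s A).Adj (Sum.inr j)))]
  rw [Fintype.card_sum]
  have h2 : Fintype.card {j' : Fin s // (fuzzyBall r s A).Adj (.inr j) (.inr j')} = 0 := by
    simp [Fintype.card_eq_zero_iff]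
    exact ⟨fun x => adj_rr A j x.1 x.2⟩
  have h1 : Fintype.card {i : Fin r // (fuzzyBall r s A).Adj (.inr j) (.inl i)} = A j := by
    rw [Fintype.card_subtype]
    rw [← blk_card A hAr j]
    congr 1
  rw [h1, h2]
  omega

/-- The normalized column matrix of a fuzzy ball. -/
noncomputable def Emat (r : ℕ) {s : ℕ} (A : Fin s → ℕ) : Matrix (Fin r) (Fin s) ℝ :=
  fun i j => if blk A j (i : ℕ) then 1 / Real.sqrt (A j) else 0

/-- The "adjacency part" of the standard Laplacian of a fuzzy ball. -/
noncomputable def Mball (r : ℕ) {s : ℕ} (A : Fin s → ℕ) :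
    Matrix (Fin r ⊕ Fin s) (Fin r ⊕ Fin s) ℝ :=
  Matrix.fromBlocks
    ((1/(r:ℝ)) • (Matrix.of (fun _ _ => (1:ℝ)) - 1))
    ((1/Real.sqrt r) • Emat r A)
    ((1/Real.sqrt r) • (Emat r A)ᵀ)
    0

lemma stdLap_fuzzy (A : Fin s → ℕ) (hAr : ∑ j, A j = r) :
    stdLap (fuzzyBall r s A) = 1 - Mball r A := by
  have hr0 : (0:ℝ) ≤ (r:ℝ) := Nat.cast_nonneg r
  ext x y
  rcases x with i | j <;> rcases y with k | j'
  · rw [stdLap]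
    simp only [Mball, Matrix.sub_apply, Matrix.fromBlocks_apply₁₁, Matrix.one_apply,
      Matrix.smul_apply, Matrix.sub_apply, Matrix.of_apply, Sum.inl.injEq]
    by_cases h : i = k
    · simp [h]
    · have hadj : (fuzzyBall r s A).Adj (.inl i) (.inl k) := h
      simp only [if_neg h, if_pos hadj, deg_inl_s8 A hAr]
      rw [Real.sqrt_mul_self hr0]
      simp [h]
  · rw [stdLap]
    have hne : (Sum.inl i : Fin r ⊕ Fin s) ≠ Sum.inr j' := by simp
    simp only [if_neg hne, Mball, Matrix.sub_apply, Matrix.fromBlocks_apply₁₂,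
      Matrix.one_apply, Matrix.smul_apply, Emat, smul_eq_mul]
    have hone : (1 : Matrix (Fin r ⊕ Fin s) (Fin r ⊕ Fin s) ℝ) (Sum.inl i) (Sum.inr j') = 0 := by
      rw [Matrix.one_apply_ne hne]
    by_cases h : blk A j' (i : ℕ)
    · have hadj : (fuzzyBall r s A).Adj (.inl i) (.inr j') := h
      rw [if_pos hadj, if_pos h, deg_inl_s8 A hAr, deg_inr_s8 A hAr]
      rw [Real.sqrt_mul hr0]
      field_simp
      ring
    · have hadj : ¬ (fuzzyBall r s A).Adj (.inl i) (.inr j') := h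
      rw [if_neg hadj, if_neg h]
      ring
  · rw [stdLap]
    have hne : (Sum.inr j : Fin r ⊕ Fin s) ≠ Sum.inl k := by simp
    simp only [if_neg hne, Mball, Matrix.sub_apply, Matrix.fromBlocks_apply₂₁,
      Matrix.smul_apply, Matrix.transpose_apply, Emat, smul_eq_mul]
    have hone : (1 : Matrix (Fin r ⊕ Fin s) (Fin r ⊕ Fin s) ℝ) (Sum.inr j) (Sum.inl k) = 0 := by
      rw [Matrix.one_apply_ne hne]
    by_cases h : blk A j (k : ℕ)
    · have hadj : (fuzzyBall r s A).Adj (.inr j) (.inl k) := h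
      rw [if_pos hadj, if_pos h, deg_inl_s8 A hAr, deg_inr_s8 A hAr]
      rw [Real.sqrt_mul (Nat.cast_nonneg (A j))]
      field_simp
      ring
      rw [hone, add_zero]
    · have hadj : ¬ (fuzzyBall r s A).Adj (.inr j) (.inl k) := h
      rw [if_neg hadj, if_neg h, hone]
      ring
  · rw [stdLap]
    simp only [Mball, Matrix.sub_apply, Matrix.fromBlocks_apply₂₂, Matrix.zero_apply,
      Matrix.one_apply, Sum.inr.injEq]
    by_cases h : j = j'
    · simp [h]
    · have hadj : ¬ (fuzzyBall r s A).Adj (.inr j) (.inr j') := fun hh => hh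
      simp [if_neg h, if_neg hadj, Sum.inr.injEq, h]

/-! #### Householder reflections -/

noncomputable def hholder {s : ℕ} (w : Fin s → ℝ) : Matrix (Fin s) (Fin s) ℝ :=
  1 - (2 / (∑ j, w j ^ 2)) • Matrix.vecMulVec w w

lemma hholder_transpose (w : Fin s → ℝ) : (hholder w)ᵀ = hholder w := by
  unfold hholder
  rw [Matrix.transpose_sub, Matrix.transpose_one, Matrix.transpose_smul]
  congr 1
  ext i j
  simp [Matrix.vecMulVec_apply, mul_comm]

lemma vecMulVec_mul_vecMulVec (w : Fin s → ℝ) :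
    Matrix.vecMulVec w w * Matrix.vecMulVec w w = (∑ j, w j ^ 2) • Matrix.vecMulVec w w := by
  ext i j
  simp only [Matrix.mul_apply, Matrix.vecMulVec_apply, Matrix.smul_apply, smul_eq_mul]
  rw [Finset.sum_congr rfl (fun k _ => by ring : ∀ k ∈ Finset.univ,
    w i * w k * (w k * w j) = (w i * w j) * w k ^ 2), ← Finset.mul_sum]
  ring

lemma sumsq_zero {w : Fin s → ℝ} (h : ∑ j, w j ^ 2 = 0) : w = 0 := by
  funext j
  have := Finset.sum_eq_zero_iff_of_nonneg (fun k (_ : k ∈ Finset.univ) => sq_nonneg (w k))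
  have h2 := (this.mp h) j (Finset.mem_univ j)
  exact pow_eq_zero_iff (by norm_num) |>.mp h2

lemma hholder_mul_self (w : Fin s → ℝ) : hholder w * hholder w = 1 := by
  set Q := ∑ j, w j ^ 2 with hQ
  unfold hholder
  have expand : (1 - (2/Q) • Matrix.vecMulVec w w) * (1 - (2/Q) • Matrix.vecMulVec w w)
      = 1 - ((2/Q + 2/Q) - (2/Q) * (2/Q) * Q) • Matrix.vecMulVec w w := by
    rw [Matrix.sub_mul, Matrix.mul_sub, Matrix.mul_sub]
    simp only [Matrix.smul_mul, Matrix.mul_smul, Matrix.one_mul, Matrix.mul_one,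
      vecMulVec_mul_vecMulVec, smul_smul, mul_assoc]
    rw [sub_smul, add_smul]
    abel
  rw [expand]
  by_cases hQ0 : Q = 0
  · have hw : Matrix.vecMulVec w w = 0 := by
      have := sumsq_zero (hQ ▸ hQ0)
      ext i j
      simp [Matrix.vecMulVec_apply, congrFun this]
    rw [hw]
    simp
  · have : (2/Q + 2/Q) - (2/Q) * (2/Q) * Q = 0 := by field_simp; ring
    rw [this, zero_smul, sub_zero]

lemma vecMulVec_mulVec (w v : Fin s → ℝ) :
    Matrix.vecMulVec w w *ᵥ v = (∑ k, w k * v k) • w := by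
  funext i
  simp only [Matrix.mulVec, Matrix.vecMulVec_apply, dotProduct, Pi.smul_apply,
    smul_eq_mul]
  rw [Finset.sum_congr rfl (fun k _ => by ring : ∀ k ∈ Finset.univ,
    w i * w k * v k = w i * (w k * v k)), ← Finset.mul_sum]
  ring

lemma hholder_mulVec (vA vB : Fin s → ℝ) (h : ∑ j, vA j ^ 2 = ∑ j, vB j ^ 2) :
    hholder (vA - vB) *ᵥ vA = vB := by
  set w : Fin s → ℝ := vA - vB with hw
  set Q : ℝ := ∑ j, w j ^ 2 with hQ
  set d : ℝ := ∑ k, w k * vA k with hd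
  have hQd : Q = 2 * d := by
    have key : ∀ k, w k ^ 2 = 2 * (w k * vA k) + (vB k ^ 2 - vA k ^ 2) := by
      intro k
      simp only [hw, Pi.sub_apply]
      ring
    rw [hQ, Finset.sum_congr rfl (fun k _ => key k), Finset.sum_add_distrib,
      Finset.sum_sub_distrib, ← Finset.mul_sum, ← hd, ← h]
    ring
  unfold hholder
  rw [Matrix.sub_mulVec, Matrix.one_mulVec, Matrix.smul_mulVec, vecMulVec_mulVec,
    ← hd, smul_smul, ← hQ]
  by_cases hd0 : d = 0
  · have hQ0 : Q = 0 := by rw [hQd, hd0]; ring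
    have hw0 : w = 0 := sumsq_zero (hQ ▸ hQ0)
    have : vA = vB := by
      funext j
      have := congrFun hw0 j
      simp only [hw, Pi.sub_apply, Pi.zero_apply] at this
      linarith
    rw [hd0, mul_zero, zero_smul, sub_zero, this]
  · have hQ0 : Q ≠ 0 := by rw [hQd]; intro hc; apply hd0; linarith
    have : 2 / Q * d = 1 := by rw [hQd]; field_simp
    rw [this, one_smul, hw]
    funext j
    simp

/-! #### Properties of `Emat` -/

lemma Emat_tr_mul_Emat (A : Fin s → ℕ) (hA1 : ∀ j, 1 ≤ A j) (hAr : ∑ j, A j = r) :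
    (Emat r A)ᵀ * Emat r A = 1 := by
  ext j l
  simp only [Matrix.mul_apply, Matrix.transpose_apply, Emat]
  by_cases h : j = l
  · subst h
    rw [Matrix.one_apply_eq]
    have hsum : ∀ i : Fin r, ((if blk A j (i:ℕ) then 1 / Real.sqrt (A j) else 0) *
        (if blk A j (i:ℕ) then 1 / Real.sqrt (A j) else 0))
        = if blk A j (i:ℕ) then (1:ℝ) / (A j) else 0 := by
      intro i
      by_cases hb : blk A j (i:ℕ)
      · rw [if_pos hb, div_mul_div_comm, one_mul, Real.mul_self_sqrt (Nat.cast_nonneg _)]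
        rw [if_pos hb]
      · simp [hb]
    rw [Finset.sum_congr rfl (fun i _ => hsum i), Finset.sum_ite, Finset.sum_const_zero,
      add_zero, Finset.sum_const, blk_card A hAr j, nsmul_eq_mul]
    have hAj : (0:ℝ) < (A j : ℝ) := by
      have := hA1 j
      exact_mod_cast Nat.lt_of_lt_of_le Nat.zero_lt_one this
    field_simp
  · rw [Matrix.one_apply_ne h]
    apply Finset.sum_eq_zero
    intro i _
    by_cases hb : blk A j (i:ℕ)
    · have : ¬ blk A l (i:ℕ) := fun hb' => h (blk_uniq A hb hb')
      simp [this]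
    · simp [hb]

lemma Emat_mulVec (A : Fin s → ℕ) (hA1 : ∀ j, 1 ≤ A j) (hAr : ∑ j, A j = r) :
    Emat r A *ᵥ (fun j => Real.sqrt (A j)) = fun _ => (1:ℝ) := by
  funext i
  simp only [Matrix.mulVec, dotProduct, Emat]
  obtain ⟨j0, hj0⟩ := blk_exists A hAr i.isLt
  have hterm : ∀ j : Fin s, (if blk A j (i:ℕ) then 1 / Real.sqrt (A j) else 0) * Real.sqrt (A j)
      = if j = j0 then 1 else 0 := by
    intro j
    by_cases hb : blk A j (i:ℕ)
    · have hj : j = j0 := blk_uniq A hb hj0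
      rw [if_pos hb, if_pos hj]
      have hAj : (0:ℝ) < Real.sqrt (A j) := Real.sqrt_pos.mpr (by
        exact_mod_cast Nat.lt_of_lt_of_le Nat.zero_lt_one (hA1 j))
      field_simp
    · have hj : j ≠ j0 := fun hh => hb (hh ▸ hj0)
      rw [if_neg hb, if_neg hj, zero_mul]
  rw [Finset.sum_congr rfl (fun j _ => hterm j),
    Finset.sum_ite_eq' Finset.univ j0 (fun _ => (1:ℝ))]
  simp

lemma sum_vA_sq (A : Fin s → ℕ) (hAr : ∑ j, A j = r) :
    ∑ j, Real.sqrt (A j) ^ 2 = (r : ℝ) := by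
  rw [Finset.sum_congr rfl (fun j _ => Real.sq_sqrt (Nat.cast_nonneg (A j)))]
  rw [← Nat.cast_sum, hAr]

/-! #### Existence of the orthogonal conjugator -/

noncomputable def colE (X : Matrix (Fin r) (Fin s) ℝ) (j : Fin s) : EuclideanSpace ℝ (Fin r) :=
  (WithLp.equiv 2 (Fin r → ℝ)).symm (fun i => X i j)

lemma colE_apply (X : Matrix (Fin r) (Fin s) ℝ) (j : Fin s) (i : Fin r) :
    colE X j i = X i j := rfl

lemma euclid_inner (x y : EuclideanSpace ℝ (Fin r)) : ⟪x, y⟫ = ∑ i, x i * y i := by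
  rw [PiLp.inner_apply]
  apply Finset.sum_congr rfl
  intro i _
  rw [RCLike.inner_apply, starRingEnd_apply, star_trivial, mul_comm]

lemma columns_on (X : Matrix (Fin r) (Fin s) ℝ) (hX : Xᵀ * X = 1) :
    Orthonormal ℝ (colE X) := by
  rw [orthonormal_iff_ite]
  intro j l
  rw [euclid_inner]
  have : ∑ i, colE X j i * colE X l i = (Xᵀ * X) j l := by
    simp [Matrix.mul_apply, Matrix.transpose_apply, colE_apply]
  rw [this, hX, Matrix.one_apply]

lemma exists_orth_conj (hsr : s ≤ r) (EA FB : Matrix (Fin r) (Fin s) ℝ)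
    (hEA : EAᵀ * EA = 1) (hFB : FBᵀ * FB = 1) :
    ∃ O : Matrix (Fin r) (Fin r) ℝ, Oᵀ * O = 1 ∧ O * EA = FB := by
  have hcard : Module.finrank ℝ (EuclideanSpace ℝ (Fin r)) = Fintype.card (Fin r) := by
    simp
  have hext : ∀ (X : Matrix (Fin r) (Fin s) ℝ), Xᵀ * X = 1 →
      ∃ b : OrthonormalBasis (Fin r) ℝ (EuclideanSpace ℝ (Fin r)), ∀ j : Fin s,
        b ⟨(j : ℕ), lt_of_lt_of_le j.isLt hsr⟩ = colE X j := by
    intro X hX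
    have hon := columns_on X hX
    classical
    set sset : Set (Fin r) := {i : Fin r | (i : ℕ) < s} with hsset
    set v : Fin r → EuclideanSpace ℝ (Fin r) :=
      fun i => if h : (i : ℕ) < s then colE X ⟨i, h⟩ else 0 with hv
    have hres : Orthonormal ℝ (sset.restrict v) := by
      rw [orthonormal_iff_ite]
      rintro ⟨i, hi⟩ ⟨i', hi'⟩
      have hi2 : (i : ℕ) < s := hi
      have hi2' : (i' : ℕ) < s := hi'
      have h1 : sset.restrict v ⟨i, hi⟩ = colE X ⟨(i:ℕ), hi2⟩ := by
        show v i = _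
        simp only [hv, dif_pos hi2]
      have h2 : sset.restrict v ⟨i', hi'⟩ = colE X ⟨(i':ℕ), hi2'⟩ := by
        show v i' = _
        simp only [hv, dif_pos hi2']
      rw [h1, h2]
      rw [orthonormal_iff_ite] at hon
      rw [hon ⟨(i:ℕ), hi2⟩ ⟨(i':ℕ), hi2'⟩]
      congr 1
      simp only [eq_iff_iff]
      rw [Subtype.ext_iff, Fin.ext_iff, Fin.ext_iff]
    obtain ⟨b, hb⟩ := hres.exists_orthonormalBasis_extension_of_card_eq hcard
    refine ⟨b, fun j => ?_⟩
    have hmem : (⟨(j : ℕ), lt_of_lt_of_le j.isLt hsr⟩ : Fin r) ∈ sset := j.isLt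
    rw [hb _ hmem]
    simp only [hv, dif_pos (show ((⟨(j : ℕ), lt_of_lt_of_le j.isLt hsr⟩ : Fin r) : ℕ) < s
      from j.isLt)]
  obtain ⟨bA, hbA⟩ := hext EA hEA
  obtain ⟨bB, hbB⟩ := hext FB hFB
  set Oiso : EuclideanSpace ℝ (Fin r) ≃ₗᵢ[ℝ] EuclideanSpace ℝ (Fin r) :=
    bA.repr.trans bB.repr.symm with hOiso
  have hObasis : ∀ i : Fin r, Oiso (bA i) = bB i := by
    intro i
    rw [hOiso]
    simp [OrthonormalBasis.repr_self]
  have hOcols : ∀ j : Fin s, Oiso (colE EA j) = colE FB j := by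
    intro j
    rw [← hbA j, hObasis, hbB j]
  set Omat : Matrix (Fin r) (Fin r) ℝ :=
    LinearMap.toMatrix' ((WithLp.linearEquiv 2 ℝ (Fin r → ℝ)).toLinearMap ∘ₗ
      Oiso.toLinearEquiv.toLinearMap ∘ₗ (WithLp.linearEquiv 2 ℝ (Fin r → ℝ)).symm.toLinearMap)
    with hOmat
  have hmulVec : ∀ x : Fin r → ℝ, Omat *ᵥ x = WithLp.ofLp (Oiso (WithLp.toLp 2 x)) := by
    intro x
    rw [hOmat, ← Matrix.toLin'_apply, Matrix.toLin'_toMatrix']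
    rfl
  refine ⟨Omat, ?_, ?_⟩
  · ext k l
    have hcol : ∀ m : Fin r, (fun i => Omat i m)
        = (Oiso ((WithLp.equiv 2 (Fin r → ℝ)).symm (Pi.single m 1)) : Fin r → ℝ) := by
      intro m
      funext i
      rw [show Omat i m = (Omat *ᵥ (Pi.single m (1:ℝ))) i by simp [Matrix.mulVec_single]]
      rw [hmulVec]
      rfl
    have h1 : (Omatᵀ * Omat) k l = ∑ i, Omat i k * Omat i l := by
      simp [Matrix.mul_apply, Matrix.transpose_apply]
    have h2 : ∑ i, Omat i k * Omat i l
        = ⟪Oiso ((WithLp.equiv 2 (Fin r → ℝ)).symm (Pi.single k 1)),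
           Oiso ((WithLp.equiv 2 (Fin r → ℝ)).symm (Pi.single l 1))⟫ := by
      rw [euclid_inner]
      apply Finset.sum_congr rfl
      intro i _
      rw [congrFun (hcol k) i, congrFun (hcol l) i]
    rw [h1, h2, Oiso.inner_map_map, euclid_inner]
    have h3 : ∑ i, ((WithLp.equiv 2 (Fin r → ℝ)).symm (Pi.single k (1:ℝ))) i *
        ((WithLp.equiv 2 (Fin r → ℝ)).symm (Pi.single l (1:ℝ))) i
        = ∑ i, (Pi.single k (1:ℝ) : Fin r → ℝ) i * (Pi.single l (1:ℝ) : Fin r → ℝ) i := rfl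
    rw [h3]
    rw [Matrix.one_apply]
    by_cases h : k = l
    · subst h
      simp [Pi.single_apply]
    · rw [if_neg h]
      apply Finset.sum_eq_zero
      intro i _
      rw [Pi.single_apply, Pi.single_apply]
      by_cases hik : i = k
      · subst hik
        simp [h]
      · simp [hik]
  · ext i j
    have : (Omat * EA) i j = (Omat *ᵥ (fun k => EA k j)) i := rfl
    rw [this]
    have h4 : (fun k => EA k j) = ((colE EA j : EuclideanSpace ℝ (Fin r)) : Fin r → ℝ) := rfl
    rw [h4, hmulVec, hOcols j]
    rfl

end Aux

open Matrix Finset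

/-- "fuzzy ball theorem", standard Laplacian part:
fuzzy balls over two `s`-partitions of `r` are isospectral. -/
theorem stmt_8 (r s : ℕ) (hs : 2 ≤ s) (A B : Fin s → ℕ)
    (hA1 : ∀ j, 1 ≤ A j) (hB1 : ∀ j, 1 ≤ B j)
    (hAr : ∑ j, A j = r) (hBr : ∑ j, B j = r) :
    spec (fuzzyBall r s A) = spec (fuzzyBall r s B) := by
  classical
  have hsr : s ≤ r := by
    calc s = ∑ _j : Fin s, 1 := by simp
    _ ≤ ∑ j, A j := Finset.sum_le_sum (fun j _ => hA1 j)
    _ = r := hAr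
  set vA : Fin s → ℝ := fun j => Real.sqrt (A j) with hvA
  set vB : Fin s → ℝ := fun j => Real.sqrt (B j) with hvB
  set U := hholder (vA - vB) with hU
  have hUU : U * U = 1 := hholder_mul_self _
  have hUt : Uᵀ = U := hholder_transpose _
  have hUvA : U *ᵥ vA = vB :=
    hholder_mulVec vA vB (by rw [hvA, hvB, sum_vA_sq A hAr, sum_vA_sq B hBr])
  have hEA : (Emat r A)ᵀ * Emat r A = 1 := Emat_tr_mul_Emat A hA1 hAr
  have hEB : (Emat r B)ᵀ * Emat r B = 1 := Emat_tr_mul_Emat B hB1 hBr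
  have hFB : (Emat r B * U)ᵀ * (Emat r B * U) = 1 := by
    rw [Matrix.transpose_mul, hUt, Matrix.mul_assoc, ← Matrix.mul_assoc (Emat r B)ᵀ, hEB,
      Matrix.one_mul, hUU]
  obtain ⟨Omat, hOt, hOE⟩ := exists_orth_conj hsr (Emat r A) (Emat r B * U) hEA hFB
  have hOO : Omat * Omatᵀ = 1 := mul_eq_one_comm.mp hOt
  -- `Omat` preserves the all-ones vector
  have e1A : Emat r A *ᵥ vA = fun _ => (1:ℝ) := by rw [hvA]; exact Emat_mulVec A hA1 hAr
  have e1B : Emat r B *ᵥ vB = fun _ => (1:ℝ) := by rw [hvB]; exact Emat_mulVec B hB1 hBr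
  have hO1 : Omat *ᵥ (fun _ => (1:ℝ)) = fun _ => (1:ℝ) := by
    calc Omat *ᵥ (fun _ => (1:ℝ)) = Omat *ᵥ (Emat r A *ᵥ vA) := by rw [e1A]
      _ = (Omat * Emat r A) *ᵥ vA := by rw [Matrix.mulVec_mulVec]
      _ = Emat r B *ᵥ (U *ᵥ vA) := by rw [hOE, ← Matrix.mulVec_mulVec]
      _ = fun _ => (1:ℝ) := by rw [hUvA, e1B]
  have hOt1 : Omatᵀ *ᵥ (fun _ => (1:ℝ)) = fun _ => (1:ℝ) := by
    conv_lhs => rw [← hO1]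
    rw [Matrix.mulVec_mulVec, hOt, Matrix.one_mulVec]
  -- `Omat` commutes with the all-ones matrix
  set Jr : Matrix (Fin r) (Fin r) ℝ := Matrix.of (fun _ _ => (1:ℝ)) with hJr
  have hJ : Omat * Jr = Jr * Omat := by
    ext i k
    have hl : (Omat * Jr) i k = (Omat *ᵥ (fun _ => (1:ℝ))) i := by
      simp [Matrix.mul_apply, Matrix.mulVec, dotProduct, hJr]
    have hr : (Jr * Omat) i k = (Omatᵀ *ᵥ (fun _ => (1:ℝ))) k := by
      simp [Matrix.mul_apply, Matrix.mulVec, dotProduct, hJr,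
        Matrix.transpose_apply, mul_comm]
    rw [hl, hr, hO1, hOt1]
  have h11 : Omat * ((1/(r:ℝ)) • (Jr - 1)) = ((1/(r:ℝ)) • (Jr - 1)) * Omat := by
    rw [Matrix.mul_smul, Matrix.smul_mul]
    congr 1
    rw [Matrix.mul_sub, Matrix.sub_mul, Matrix.mul_one, Matrix.one_mul, hJ]
  have h12 : Omat * ((1/Real.sqrt r) • Emat r A)
      = ((1/Real.sqrt r) • Emat r B) * U := by
    rw [Matrix.mul_smul, Matrix.smul_mul, hOE]
  have h21 : U * ((1/Real.sqrt r) • (Emat r A)ᵀ)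
      = ((1/Real.sqrt r) • (Emat r B)ᵀ) * Omat := by
    rw [Matrix.mul_smul, Matrix.smul_mul]
    congr 1
    -- transpose of hOE plus orthogonality
    have h6 : (Emat r A)ᵀ * Omatᵀ = U * (Emat r B)ᵀ := by
      have := congrArg Matrix.transpose hOE
      rwa [Matrix.transpose_mul, Matrix.transpose_mul, hUt] at this
    calc U * (Emat r A)ᵀ
        = U * ((Emat r A)ᵀ * (Omatᵀ * Omat)) := by rw [hOt, Matrix.mul_one]
      _ = U * (((Emat r A)ᵀ * Omatᵀ) * Omat) := by rw [Matrix.mul_assoc]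
      _ = U * ((U * (Emat r B)ᵀ) * Omat) := by rw [h6]
      _ = (U * U) * ((Emat r B)ᵀ * Omat) := by
          simp only [Matrix.mul_assoc]
      _ = (Emat r B)ᵀ * Omat := by rw [hUU, Matrix.one_mul]
  -- the conjugating matrix
  set P : Matrix (Fin r ⊕ Fin s) (Fin r ⊕ Fin s) ℝ := Matrix.fromBlocks Omat 0 0 U with hP
  set Pinv : Matrix (Fin r ⊕ Fin s) (Fin r ⊕ Fin s) ℝ := Matrix.fromBlocks Omatᵀ 0 0 U
    with hPinv
  have hPPinv : P * Pinv = 1 := by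
    rw [hP, hPinv, Matrix.fromBlocks_multiply]
    simp only [Matrix.mul_zero, Matrix.zero_mul, add_zero, zero_add, hOO, hUU]
    exact Matrix.fromBlocks_one
  have hPinvP : Pinv * P = 1 := by
    rw [hP, hPinv, Matrix.fromBlocks_multiply]
    simp only [Matrix.mul_zero, Matrix.zero_mul, add_zero, zero_add, hOt, hUU]
    exact Matrix.fromBlocks_one
  have hPM : P * Mball r A = Mball r B * P := by
    rw [hP, Mball, Mball, Matrix.fromBlocks_multiply, Matrix.fromBlocks_multiply]
    simp only [Matrix.mul_zero, Matrix.zero_mul, add_zero, zero_add, ← hJr]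
    rw [h11, h12, h21]
  have hPL : P * (1 - Mball r A) = (1 - Mball r B) * P := by
    rw [Matrix.mul_sub, Matrix.sub_mul, Matrix.mul_one, Matrix.one_mul, hPM]
  have hcp : (stdLap (fuzzyBall r s A)).charpoly = (stdLap (fuzzyBall r s B)).charpoly := by
    rw [stdLap_fuzzy A hAr, stdLap_fuzzy B hBr]
    exact charpoly_similar P Pinv _ _ hPPinv hPinvP hPL
  rw [spec, spec]
  exact congrArg Polynomial.roots ((charpoly_irrel _ _ _).trans
    (hcp.trans (charpoly_irrel _ _ _)))
end

section
/- Let A = (a_1,…,a_s) and B = (b_1,…,b_s) be two s-partitions of r ∈ ℕ with s ≥ 2 that are different as multisets, i.e. the multiset {a_1,…,a_s} differs from the multiset {b_1,…,b_s}. Then the fuzzy ball graphs K̂_r(A) and K̂_r(B) are not isomorphic as simple graphs. -/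
open scoped Classical

namespace FuzzyAux

/-- cumulative sums over ℕ -/
def csum {s : ℕ} (A : Fin s → ℕ) (n : ℕ) : ℕ :=
  ∑ k ∈ Finset.univ.filter (fun k : Fin s => (k : ℕ) < n), A k

lemma csum_zero {s : ℕ} (A : Fin s → ℕ) : csum A 0 = 0 := by
  simp [csum]

lemma csum_succ {s : ℕ} (A : Fin s → ℕ) (n : ℕ) (h : n < s) :
    csum A (n + 1) = csum A n + A ⟨n, h⟩ := by
  unfold csum
  rw [show Finset.univ.filter (fun k : Fin s => (k : ℕ) < n + 1)
      = insert ⟨n, h⟩ (Finset.univ.filter (fun k : Fin s => (k : ℕ) < n)) by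
    ext k
    simp [Nat.lt_succ_iff_lt_or_eq, Fin.ext_iff, or_comm]; omega]
  rw [Finset.sum_insert (by simp)]
  ring

lemma csum_mono {s : ℕ} (A : Fin s → ℕ) : Monotone (csum A) := by
  intro m n hmn
  exact Finset.sum_le_sum_of_subset (by
    intro k hk
    simp only [Finset.mem_filter] at *
    exact ⟨hk.1, lt_of_lt_of_le hk.2 hmn⟩)

lemma csum_top {s r : ℕ} (A : Fin s → ℕ) (hAr : ∑ j, A j = r) : csum A s = r := by
  rw [← hAr]
  unfold csum
  congr 1
  ext k
  simp [k.isLt]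

lemma sum_Iio {s : ℕ} (A : Fin s → ℕ) (j : Fin s) :
    ∑ k ∈ Finset.Iio j, A k = csum A j := by
  unfold csum
  congr 1
  ext k
  simp only [Finset.mem_Iio, Finset.mem_filter, Finset.mem_univ, true_and, Fin.lt_def]

lemma sum_Iic {s : ℕ} (A : Fin s → ℕ) (j : Fin s) :
    ∑ k ∈ Finset.Iic j, A k = csum A (j + 1) := by
  unfold csum
  congr 1
  ext k
  simp only [Finset.mem_Iic, Finset.mem_filter, Finset.mem_univ, true_and, Fin.le_def,
    Nat.lt_succ_iff]

/-- existence and uniqueness of the interval containing i -/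
lemma exists_unique_interval {s r : ℕ} (A : Fin s → ℕ) (hs : 1 ≤ s)
    (hAr : ∑ j, A j = r) (i : ℕ) (hi : i < r) :
    ∃! j : Fin s, csum A j ≤ i ∧ i < csum A (j + 1) := by
  have hs1 : s - 1 + 1 = s := Nat.sub_add_cancel hs
  have hp : i < csum A ((s - 1) + 1) := by
    rw [hs1, csum_top A hAr]; exact hi
  classical
  have hex : ∃ n, i < csum A (n + 1) := ⟨s - 1, hp⟩
  set n := Nat.find hex with hn
  have hns : n < s := lt_of_le_of_lt (Nat.find_le hp) (by omega)
  have hupper : i < csum A (n + 1) := Nat.find_spec hex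
  have hlower : csum A n ≤ i := by
    rcases Nat.eq_zero_or_pos n with h0 | h0
    · rw [h0, csum_zero]; exact Nat.zero_le _
    · have := Nat.find_min hex (m := n - 1) (by omega)
      push_neg at this
      have h1 : csum A ((n-1)+1) ≤ i := this
      have h2 : n - 1 + 1 = n := Nat.sub_add_cancel h0
      rwa [h2] at h1
  refine ⟨⟨n, hns⟩, ⟨hlower, hupper⟩, ?_⟩
  rintro ⟨m, hms⟩ ⟨h1, h2⟩
  have h1' : csum A m ≤ i := h1
  have h2' : i < csum A (m + 1) := h2
  ext
  show m = n
  by_contra hne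
  rcases Nat.lt_or_ge m n with h | h
  · have hle : csum A (m + 1) ≤ csum A n := csum_mono A (by omega)
    omega
  · have hle : csum A (n + 1) ≤ csum A m := csum_mono A (by omega)
    omega


lemma card_interval (r a b : ℕ) (hb : b ≤ r) :
    Nat.card {i : Fin r // a ≤ (i : ℕ) ∧ (i : ℕ) < b} = b - a := by
  have e : {i : Fin r // a ≤ (i : ℕ) ∧ (i : ℕ) < b} ≃ (Finset.Ico a b : Finset ℕ) :=
    { toFun := fun i => ⟨(i.1 : ℕ), Finset.mem_Ico.2 ⟨i.2.1, i.2.2⟩⟩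
      invFun := fun x => ⟨⟨x.1, lt_of_lt_of_le (Finset.mem_Ico.1 x.2).2 hb⟩,
        (Finset.mem_Ico.1 x.2).1, (Finset.mem_Ico.1 x.2).2⟩
      left_inv := fun i => by ext; rfl
      right_inv := fun x => rfl }
  rw [Nat.card_congr e, Nat.card_eq_fintype_card, Fintype.card_coe, Nat.card_Ico]

lemma nd_inr (r s : ℕ) (A : Fin s → ℕ) (hAr : ∑ j, A j = r) (j : Fin s) :
    Nat.card ((fuzzyBall r s A).neighborSet (Sum.inr j)) = A j := by
  have key : Nat.card ((fuzzyBall r s A).neighborSet (Sum.inr j))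
      = Nat.card {i : Fin r // csum A j ≤ (i : ℕ) ∧ (i : ℕ) < csum A ((j : ℕ) + 1)}
        + Nat.card {j' : Fin s // False} := by
    rw [← Nat.card_sum]
    refine Nat.card_congr ((Equiv.subtypeSum).trans (Equiv.sumCongr
      (Equiv.subtypeEquivRight fun i => ?_) (Equiv.subtypeEquivRight fun j' => ?_)))
    · show ((∑ k ∈ Finset.Iio j, A k) ≤ (i : ℕ) ∧ (i : ℕ) < ∑ k ∈ Finset.Iic j, A k) ↔ _
      rw [sum_Iio, sum_Iic]
    · exact Iff.rfl
  rw [key]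
  have h0 : Nat.card {j' : Fin s // False} = 0 := by
    simp [Nat.card_eq_zero]
  rw [h0, add_zero]
  have hb : csum A ((j : ℕ) + 1) ≤ r := by
    have := csum_mono A (Nat.succ_le_of_lt j.isLt)
    rw [csum_top A hAr] at this
    exact this
  rw [card_interval r _ _ hb, csum_succ A j j.isLt, Fin.eta]
  omega

lemma nd_inl (r s : ℕ) (A : Fin s → ℕ) (hs : 1 ≤ s) (hr : 1 ≤ r)
    (hAr : ∑ j, A j = r) (i : Fin r) :
    Nat.card ((fuzzyBall r s A).neighborSet (Sum.inl i)) = r := by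
  have key : Nat.card ((fuzzyBall r s A).neighborSet (Sum.inl i))
      = Nat.card {i' : Fin r // i' ≠ i}
        + Nat.card {j : Fin s // csum A j ≤ (i : ℕ) ∧ (i : ℕ) < csum A ((j : ℕ) + 1)} := by
    rw [← Nat.card_sum]
    refine Nat.card_congr ((Equiv.subtypeSum).trans (Equiv.sumCongr
      (Equiv.subtypeEquivRight fun i' => ?_) (Equiv.subtypeEquivRight fun j => ?_)))
    · exact ne_comm
    · show ((∑ k ∈ Finset.Iio j, A k) ≤ (i : ℕ) ∧ (i : ℕ) < ∑ k ∈ Finset.Iic j, A k) ↔ _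
      rw [sum_Iio, sum_Iic]
  rw [key]
  have h1 : Nat.card {i' : Fin r // i' ≠ i} = r - 1 := by
    rw [Nat.card_eq_fintype_card]
    have : Fintype.card {i' : Fin r // i' ≠ i} = Fintype.card (Fin r) - Fintype.card {i' : Fin r // i' = i} :=
      Fintype.card_subtype_compl _
    rw [this, Fintype.card_subtype_eq, Fintype.card_fin]
  have h2 : Nat.card {j : Fin s // csum A j ≤ (i : ℕ) ∧ (i : ℕ) < csum A ((j : ℕ) + 1)} = 1 := by
    obtain ⟨j0, hj0, huniq⟩ := exists_unique_interval A hs hAr i i.isLt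
    rw [Nat.card_eq_fintype_card, Fintype.card_eq_one_iff]
    exact ⟨⟨j0, hj0⟩, fun y => Subtype.ext (huniq y.1 y.2)⟩
  rw [h1, h2]
  omega

lemma degMultiset (r s : ℕ) (A : Fin s → ℕ) (hs : 1 ≤ s) (hr : 1 ≤ r)
    (hAr : ∑ j, A j = r) :
    (Finset.univ.val.map (fun v => Nat.card ((fuzzyBall r s A).neighborSet v)))
      = Multiset.replicate r r + Finset.univ.val.map A := by
  rw [← Finset.univ_disjSum_univ, Finset.val_disjSum, Multiset.disjSum,
    Multiset.map_add, Multiset.map_map, Multiset.map_map]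
  congr 1
  · have hfun : ((fun v => Nat.card ((fuzzyBall r s A).neighborSet v)) ∘ Sum.inl)
        = fun _ : Fin r => r := funext (fun i => nd_inl r s A hs hr hAr i)
    rw [hfun, Multiset.map_const']
    congr 1
    rw [show Multiset.card Finset.univ.val = (Finset.univ : Finset (Fin r)).card from rfl,
      Finset.card_univ, Fintype.card_fin]
  · have hfun : ((fun v => Nat.card ((fuzzyBall r s A).neighborSet v)) ∘ Sum.inr) = A :=
      funext (fun j => nd_inr r s A hAr j)
    rw [hfun]

end FuzzyAux

/-- fuzzy balls over two `s`-partitions of `r` which differ as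
multisets are not isomorphic. -/
theorem stmt_10 (r s : ℕ) (hs : 2 ≤ s) (A B : Fin s → ℕ)
    (hA1 : ∀ j, 1 ≤ A j) (hB1 : ∀ j, 1 ≤ B j)
    (hAr : ∑ j, A j = r) (hBr : ∑ j, B j = r)
    (hAB : (Finset.univ.val.map A : Multiset ℕ) ≠ Finset.univ.val.map B) :
    IsEmpty (fuzzyBall r s A ≃g fuzzyBall r s B) := by
  constructor
  intro f
  apply hAB
  have hs1 : 1 ≤ s := le_trans (by norm_num) hs
  have hr : 1 ≤ r := by
    rw [← hAr]
    calc 1 ≤ s := hs1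
    _ = ∑ _j : Fin s, 1 := by simp
    _ ≤ ∑ j, A j := Finset.sum_le_sum (fun j _ => hA1 j)
  have hdeg : ∀ v, Nat.card ((fuzzyBall r s A).neighborSet v)
      = Nat.card ((fuzzyBall r s B).neighborSet (f v)) :=
    fun v => Nat.card_congr (f.mapNeighborSet v)
  have hmap : (Finset.univ.val.map (fun v => Nat.card ((fuzzyBall r s A).neighborSet v)))
      = Finset.univ.val.map (fun v => Nat.card ((fuzzyBall r s B).neighborSet v)) := by
    calc (Finset.univ.val.map (fun v => Nat.card ((fuzzyBall r s A).neighborSet v)))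
        = Finset.univ.val.map
            ((fun v => Nat.card ((fuzzyBall r s B).neighborSet v)) ∘ f) :=
          Multiset.map_congr rfl (fun v _ => hdeg v)
      _ = (Finset.univ.val.map f).map
            (fun v => Nat.card ((fuzzyBall r s B).neighborSet v)) :=
          (Multiset.map_map _ _ _).symm
      _ = Finset.univ.val.map (fun v => Nat.card ((fuzzyBall r s B).neighborSet v)) := by
          congr 1
          have := Finset.map_univ_equiv f.toEquiv
          calc Finset.univ.val.map ⇑f
              = (Finset.univ.map f.toEquiv.toEmbedding).val := (Finset.map_val _ _).symm
            _ = Finset.univ.val := by rw [this]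
  rw [FuzzyAux.degMultiset r s A hs1 hr hAr, FuzzyAux.degMultiset r s B hs1 hr hBr] at hmap
  exact add_left_cancel hmap
end

section
/- Let p ≥ 1, r ≥ 4, and let A = (a_1,…,a_s) and B = (b_1,…,b_s) be two s-partitions of r (2 ≤ s ≤ r−1) that are different as multisets. Then the fuzzy complete bipartite graphs K̂_{p,r}(A) and K̂_{p,r}(B) are isospectral for the standard Laplacian—the multisets of eigenvalues of Δ_{K̂_{p,r}(A)} and Δ_{K̂_{p,r}(B)} coincide—and the two graphs are not isomorphic as simple graphs. -/
open scoped Classical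

/-- The fuzzy complete bipartite graph `K̂_{p,r}(A)`: the vertices
`.inl i` (`i : Fin p`) are adjacent to all vertices `.inr (.inl i')`
(`i' : Fin r`), and the vertex `.inr (.inr j)` (`j : Fin s`) is adjacent
exactly to the `A j` vertices `.inr (.inl i')` with
`a_1 + ⋯ + a_{j-1} ≤ i' < a_1 + ⋯ + a_j` (0-based). -/
def fuzzyBip (p r s : ℕ) (A : Fin s → ℕ) : SimpleGraph (Fin p ⊕ Fin r ⊕ Fin s) where
  Adj x y :=
    match x, y with
    | .inl _, .inr (.inl _) => True
    | .inr (.inl _), .inl _ => True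
    | .inr (.inl i), .inr (.inr j) =>
        (∑ k ∈ Finset.Iio j, A k) ≤ (i : ℕ) ∧ (i : ℕ) < ∑ k ∈ Finset.Iic j, A k
    | .inr (.inr j), .inr (.inl i) =>
        (∑ k ∈ Finset.Iio j, A k) ≤ (i : ℕ) ∧ (i : ℕ) < ∑ k ∈ Finset.Iic j, A k
    | _, _ => False
  symm := by
    constructor
    rintro (i | i | i) (j | j | j) h <;> exact h
  loopless := by
    constructor
    rintro (i | i | i) h <;> exact h


namespace Fuzzy
open Matrix
open Finset



variable {r s : ℕ}

/-- partial sum before block `j` -/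
def psum (X : Fin s → ℕ) (j : Fin s) : ℕ := ∑ k ∈ Finset.Iio j, X k

lemma sum_Iic_eq (X : Fin s → ℕ) (j : Fin s) :
    ∑ k ∈ Finset.Iic j, X k = psum X j + X j := by
  rw [← Finset.Iio_insert, Finset.sum_insert (by simp), psum, add_comm]

lemma psum_add_le (X : Fin s → ℕ) (j : Fin s) : psum X j + X j ≤ ∑ k, X k := by
  rw [← sum_Iic_eq]
  exact Finset.sum_le_sum_of_subset (Finset.subset_univ _)

lemma psum_succ (X : Fin s → ℕ) (j : Fin s) (hj : (j : ℕ) + 1 < s) :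
    psum X ⟨(j : ℕ) + 1, hj⟩ = psum X j + X j := by
  rw [← sum_Iic_eq, psum]
  have : (Finset.Iio (⟨(j : ℕ) + 1, hj⟩ : Fin s)) = Finset.Iic j := by
    ext k
    simp only [Finset.mem_Iio, Finset.mem_Iic, Fin.lt_def, Fin.le_def]
    omega
  rw [this]

lemma psum_zero (X : Fin s → ℕ) (hs : 0 < s) : psum X ⟨0, hs⟩ = 0 := by
  apply Finset.sum_eq_zero
  intro k hk
  simp only [Finset.mem_Iio, Fin.lt_def] at hk
  omega

lemma psum_last (X : Fin s → ℕ) (j : Fin s) (hj : (j : ℕ) + 1 = s) :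
    psum X j + X j = ∑ k, X k := by
  rw [← sum_Iic_eq]
  apply Finset.sum_subset (Finset.subset_univ _)
  intro k _ hk
  simp only [Finset.mem_Iic, Fin.le_def] at hk
  omega

lemma blk_unique (X : Fin s → ℕ) {i : ℕ} {j j' : Fin s}
    (hj : psum X j ≤ i ∧ i < psum X j + X j)
    (hj' : psum X j' ≤ i ∧ i < psum X j' + X j') : j = j' := by
  by_contra hne
  have key : ∀ a b : Fin s, a < b → psum X a + X a ≤ psum X b := by
    intro a b hab
    rw [← sum_Iic_eq]
    apply Finset.sum_le_sum_of_subset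
    intro k hk
    simp only [Finset.mem_Iic] at hk
    simp only [Finset.mem_Iio]
    exact lt_of_le_of_lt hk hab
  rcases lt_or_gt_of_ne hne with h | h
  · have := key j j' h; omega
  · have := key j' j h; omega

lemma blk_exists (X : Fin s → ℕ) (h1 : ∀ j, 1 ≤ X j) (hr : ∑ j, X j = r) :
    ∀ i : ℕ, i < r → ∃ j : Fin s, psum X j ≤ i ∧ i < psum X j + X j := by
  intro i
  induction i with
  | zero =>
    intro hn
    have hs : 0 < s := by
      rcases Nat.eq_zero_or_pos s with h | h
      · subst h
        simp only [Finset.univ_eq_empty, Finset.sum_empty] at hr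
        omega
      · exact h
    refine ⟨⟨0, hs⟩, by rw [psum_zero], ?_⟩
    rw [psum_zero]
    have := h1 (⟨0, hs⟩ : Fin s)
    omega
  | succ n ih =>
    intro hn
    obtain ⟨j, hj1, hj2⟩ := ih (by omega)
    rcases Nat.lt_or_ge (n + 1) (psum X j + X j) with h | h
    · exact ⟨j, by omega, h⟩
    · have hne : (j : ℕ) + 1 ≠ s := by
        intro hcon
        have := psum_last X j hcon
        omega
      have hlt : (j : ℕ) + 1 < s := lt_of_le_of_ne j.2 hne
      refine ⟨⟨(j : ℕ) + 1, hlt⟩, ?_, ?_⟩ <;> rw [psum_succ X j hlt]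
      · omega
      · have := h1 (⟨(j : ℕ) + 1, hlt⟩ : Fin s)
        omega

lemma existsUnique_blk (X : Fin s → ℕ) (h1 : ∀ j, 1 ≤ X j) (hr : ∑ j, X j = r)
    {i : ℕ} (hi : i < r) :
    ∃! j : Fin s, psum X j ≤ i ∧ i < psum X j + X j := by
  obtain ⟨j, hj⟩ := blk_exists X h1 hr i hi
  exact ⟨j, hj, fun j' hj' => blk_unique X hj' hj⟩



lemma adj_iff (p r s : ℕ) (X : Fin s → ℕ) (i : Fin r) (j : Fin s) :
    (fuzzyBip p r s X).Adj (.inr (.inl i)) (.inr (.inr j)) ↔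
      (psum X j ≤ (i : ℕ) ∧ (i : ℕ) < psum X j + X j) := by
  show ((∑ k ∈ Finset.Iio j, X k) ≤ (i : ℕ) ∧ (i : ℕ) < ∑ k ∈ Finset.Iic j, X k) ↔ _
  rw [sum_Iic_eq]
  rfl

lemma deg_filter {V : Type*} [Fintype V] (G : SimpleGraph V) (u : V) :
    deg G u = (Finset.univ.filter (fun v => G.Adj u v)).card := by
  rw [deg, Nat.card_coe_set_eq, Set.ncard_eq_toFinset_card']
  simp [Set.toFinset_setOf]

variable {p : ℕ} {X : Fin s → ℕ}

lemma deg_x (i : Fin p) : deg (fuzzyBip p r s X) (.inl i) = r := by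
  rw [deg_filter, Finset.card_filter, Fintype.sum_sum_type, Fintype.sum_sum_type]
  simp [fuzzyBip]

lemma deg_u (h1 : ∀ j, 1 ≤ X j) (hr : ∑ j, X j = r) (i : Fin r) :
    deg (fuzzyBip p r s X) (.inr (.inl i)) = p + 1 := by
  rw [deg_filter, Finset.card_filter, Fintype.sum_sum_type, Fintype.sum_sum_type]
  have h2 : ∀ j : Fin s, (fuzzyBip p r s X).Adj (.inr (.inl i)) (.inr (.inr j)) ↔
      (psum X j ≤ (i : ℕ) ∧ (i : ℕ) < psum X j + X j) := adj_iff p r s X i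
  have hcount : (∑ j : Fin s, if (fuzzyBip p r s X).Adj (.inr (.inl i)) (.inr (.inr j))
      then 1 else 0) = 1 := by
    obtain ⟨j₀, hj₀, huniq⟩ := existsUnique_blk X h1 hr i.2
    rw [Finset.sum_eq_single j₀]
    · simp [h2, hj₀]
    · intro b _ hb
      simp only [h2, ite_eq_right_iff]
      intro hbb
      exact absurd (huniq b hbb) hb
    · simp
  rw [hcount]
  simp [fuzzyBip]

lemma deg_w (hr : ∑ j, X j = r) (j : Fin s) :
    deg (fuzzyBip p r s X) (.inr (.inr j)) = X j := by
  have hle : psum X j + X j ≤ r := hr ▸ psum_add_le X j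
  rw [deg_filter, Finset.card_filter, Fintype.sum_sum_type, Fintype.sum_sum_type]
  have h2 : ∀ i : Fin r, (fuzzyBip p r s X).Adj (.inr (.inr j)) (.inr (.inl i)) ↔
      (psum X j ≤ (i : ℕ) ∧ (i : ℕ) < psum X j + X j) := by
    intro i
    rw [(fuzzyBip p r s X).adj_comm]
    exact adj_iff p r s X i j
  have hcount : (∑ i : Fin r, if (fuzzyBip p r s X).Adj (.inr (.inr j)) (.inr (.inl i))
      then 1 else 0) = X j := by
    simp only [h2]
    rw [← Finset.card_filter]
    have hcard : (Finset.univ.filter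
        (fun i : Fin r => psum X j ≤ (i : ℕ) ∧ (i : ℕ) < psum X j + X j)).card
        = (Finset.Ico (psum X j) (psum X j + X j)).card := by
      exact Finset.card_bij' (fun (i : Fin r) _ => (i : ℕ))
        (fun k hk => (⟨k, lt_of_lt_of_le (Finset.mem_Ico.mp hk).2 hle⟩ : Fin r))
        (fun a ha => Finset.mem_Ico.mpr (Finset.mem_filter.mp ha).2)
        (fun a ha => Finset.mem_filter.mpr ⟨Finset.mem_univ _, Finset.mem_Ico.mp ha⟩)
        (fun a ha => rfl) (fun a ha => rfl)
    rw [hcard, Nat.card_Ico]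
    omega
  rw [hcount]
  simp [fuzzyBip]

lemma deg_iso {V W : Type*} [Fintype V] [Fintype W] {G : SimpleGraph V} {H : SimpleGraph W}
    (e : G ≃g H) (v : V) : deg H (e v) = deg G v := by
  rw [deg, deg]
  apply Nat.card_congr
  exact (Equiv.subtypeEquiv e.toEquiv (fun a => by
    simp only [Set.mem_setOf_eq]
    exact (e.map_adj_iff).symm)).symm

lemma degMultiset_iso {V W : Type*} [Fintype V] [Fintype W] {G : SimpleGraph V}
    {H : SimpleGraph W} (e : G ≃g H) :
    Finset.univ.val.map (deg G) = Finset.univ.val.map (deg H) := by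
  have h1 : Finset.univ.val.map (deg G) = Finset.univ.val.map ((deg H) ∘ e) := by
    apply Multiset.map_congr rfl
    intro v _
    exact (deg_iso e v).symm
  rw [h1, ← Multiset.map_map]
  congr 1
  have := Finset.map_univ_equiv e.toEquiv.symm
  calc Multiset.map (⇑e) Finset.univ.val
      = (Finset.univ.map e.toEquiv.toEmbedding).val := rfl
    _ = Finset.univ.val := by rw [Finset.map_univ_equiv]

lemma degMultiset_fuzzy (h1 : ∀ j, 1 ≤ X j) (hr : ∑ j, X j = r) :
    (Finset.univ.val.map (deg (fuzzyBip p r s X))) =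
      Multiset.replicate p r + (Multiset.replicate r (p + 1) +
        Finset.univ.val.map X) := by
  have huniv : (Finset.univ : Finset (Fin p ⊕ Fin r ⊕ Fin s)).val
      = Finset.univ.val.map Sum.inl +
        ((Finset.univ : Finset (Fin r ⊕ Fin s)).val.map Sum.inr) := by
    rfl
  have huniv2 : (Finset.univ : Finset (Fin r ⊕ Fin s)).val
      = Finset.univ.val.map Sum.inl + (Finset.univ.val.map Sum.inr) := rfl
  rw [huniv, huniv2]
  simp only [Multiset.map_add, Multiset.map_map]
  congr 1
  · refine (Multiset.map_congr rfl (fun i _ => deg_x i)).trans ?_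
    simp [Multiset.map_const', Multiset.replicate]
  · congr 1
    · refine (Multiset.map_congr rfl (fun i _ => deg_u h1 hr i)).trans ?_
      simp [Multiset.map_const', Multiset.replicate]
    · apply Multiset.map_congr rfl
      intro j _
      exact deg_w hr j

lemma not_iso (A B : Fin s → ℕ)
    (hA1 : ∀ j, 1 ≤ A j) (hB1 : ∀ j, 1 ≤ B j)
    (hAr : ∑ j, A j = r) (hBr : ∑ j, B j = r)
    (hAB : (Finset.univ.val.map A : Multiset ℕ) ≠ Finset.univ.val.map B) :
    IsEmpty (fuzzyBip p r s A ≃g fuzzyBip p r s B) := by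
  constructor
  intro e
  apply hAB
  have h := degMultiset_iso e
  rw [degMultiset_fuzzy hA1 hAr, degMultiset_fuzzy hB1 hBr] at h
  exact add_left_cancel (add_left_cancel h)

/-! ### The V matrices and c vectors -/

def blkP (X : Fin s → ℕ) (i : Fin r) (j : Fin s) : Prop :=
  psum X j ≤ (i : ℕ) ∧ (i : ℕ) < psum X j + X j

lemma card_blk (X : Fin s → ℕ) (hr : ∑ j, X j = r) (j : Fin s) :
    (Finset.univ.filter (fun i : Fin r => blkP X i j)).card = X j := by
  have hle : psum X j + X j ≤ r := hr ▸ psum_add_le X j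
  have hcard : (Finset.univ.filter (fun i : Fin r => blkP X i j)).card
      = (Finset.Ico (psum X j) (psum X j + X j)).card := by
    exact Finset.card_bij' (fun (i : Fin r) _ => (i : ℕ))
      (fun k hk => (⟨k, lt_of_lt_of_le (Finset.mem_Ico.mp hk).2 hle⟩ : Fin r))
      (fun a ha => Finset.mem_Ico.mpr (Finset.mem_filter.mp ha).2)
      (fun a ha => Finset.mem_filter.mpr ⟨Finset.mem_univ _, Finset.mem_Ico.mp ha⟩)
      (fun a ha => rfl) (fun a ha => rfl)
  rw [hcard, Nat.card_Ico]
  omega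

lemma row_sum_blk (X : Fin s → ℕ) (h1 : ∀ j, 1 ≤ X j) (hr : ∑ j, X j = r) (i : Fin r) :
    ∃ j₀ : Fin s, blkP X i j₀ ∧
      ∀ f : Fin s → ℝ, (∑ j, if blkP X i j then f j else 0) = f j₀ := by
  obtain ⟨j₀, hj₀, huniq⟩ := existsUnique_blk X h1 hr i.2
  refine ⟨j₀, hj₀, fun f => ?_⟩
  rw [Finset.sum_eq_single j₀]
  · simp [blkP, hj₀]
  · intro b _ hb
    rw [if_neg]
    intro hbb
    exact hb (huniq b hbb)
  · simp

noncomputable def Vm (r : ℕ) (X : Fin s → ℕ) : Matrix (Fin r) (Fin s) ℝ :=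
  fun i j => if blkP X i j then (Real.sqrt (X j))⁻¹ else 0

noncomputable def cv (r : ℕ) (X : Fin s → ℕ) : Fin s → ℝ :=
  fun j => Real.sqrt (X j) / Real.sqrt r

lemma sqrt_pos_of_one_le {n : ℕ} (h : 1 ≤ n) : 0 < Real.sqrt n :=
  Real.sqrt_pos.mpr (by exact_mod_cast Nat.lt_of_lt_of_le Nat.zero_lt_one h)

lemma Vm_transpose_mul_Vm (X : Fin s → ℕ) (h1 : ∀ j, 1 ≤ X j) (hr : ∑ j, X j = r) :
    (Vm r X)ᵀ * Vm r X = 1 := by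
  ext j j'
  rw [Matrix.mul_apply]
  simp only [Matrix.transpose_apply, Vm]
  by_cases hjj : j = j'
  · subst hjj
    have hstep : ∀ i : Fin r,
        ((if blkP X i j then (Real.sqrt (X j))⁻¹ else 0) *
          (if blkP X i j then (Real.sqrt (X j))⁻¹ else 0))
        = (if blkP X i j then ((X j : ℝ))⁻¹ else 0) := by
      intro i
      by_cases h : blkP X i j
      · simp only [if_pos h]
        rw [← mul_inv, Real.mul_self_sqrt (by positivity)]
      · simp [if_neg h]
    rw [Finset.sum_congr rfl (fun i _ => hstep i), ← Finset.sum_filter,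
      Finset.sum_const, card_blk X hr j]
    rw [Matrix.one_apply_eq, nsmul_eq_mul]
    have : (X j : ℝ) ≠ 0 := by
      have := h1 j; positivity
    field_simp
  · rw [Matrix.one_apply_ne hjj]
    apply Finset.sum_eq_zero
    intro i _
    by_cases h : blkP X i j
    · by_cases h' : blkP X i j'
      · exact absurd (blk_unique X h h') hjj
      · simp [if_neg h']
    · simp [if_neg h]

lemma Vm_mulVec_cv (X : Fin s → ℕ) (h1 : ∀ j, 1 ≤ X j) (hr : ∑ j, X j = r) :
    Vm r X *ᵥ cv r X = fun _ => (Real.sqrt r)⁻¹ := by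
  funext i
  rw [Matrix.mulVec]
  show (∑ j, Vm r X i j * cv r X j) = _
  obtain ⟨j₀, hj₀, hsum⟩ := row_sum_blk X h1 hr i
  have : ∀ j : Fin s, Vm r X i j * cv r X j
      = if blkP X i j then (Real.sqrt (X j))⁻¹ * (Real.sqrt (X j) / Real.sqrt r) else 0 := by
    intro j
    simp only [Vm, cv, ite_mul, zero_mul]
  rw [Finset.sum_congr rfl (fun j _ => this j), hsum]
  have hne : Real.sqrt (X j₀) ≠ 0 := ne_of_gt (sqrt_pos_of_one_le (h1 j₀))
  field_simp

lemma sum_cv_sq (X : Fin s → ℕ) (hr : ∑ j, X j = r) (hr0 : 0 < r) :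
    (∑ j, cv r X j * cv r X j) = 1 := by
  have hrne : (r : ℝ) ≠ 0 := by positivity
  have : ∀ j : Fin s, cv r X j * cv r X j = (X j : ℝ) / r := by
    intro j
    simp only [cv, div_mul_div_comm]
    rw [Real.mul_self_sqrt (by positivity), Real.mul_self_sqrt (by positivity)]
  rw [Finset.sum_congr rfl (fun j _ => this j), ← Finset.sum_div]
  rw [← Nat.cast_sum, hr]
  field_simp

/-! ### Householder matrix Q -/

noncomputable def Qm (c d : Fin s → ℝ) : Matrix (Fin s) (Fin s) ℝ :=
  if c = d then 1 else
    1 - (2 / ∑ j, (c j - d j) * (c j - d j)) •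
      Matrix.of (fun j j' => (c j - d j) * (c j' - d j'))

lemma Qm_symm (c d : Fin s → ℝ) : (Qm c d)ᵀ = Qm c d := by
  unfold Qm
  split_ifs with h
  · exact Matrix.transpose_one
  · ext j j'
    simp only [Matrix.transpose_apply, Matrix.sub_apply, Matrix.smul_apply,
      Matrix.of_apply, Matrix.one_apply, smul_eq_mul]
    rcases eq_or_ne j j' with rfl | hne
    · ring
    · simp only [if_neg hne, if_neg (Ne.symm hne)]
      ring

section QmFacts

variable {c d : Fin s → ℝ} (hc : ∑ j, c j * c j = 1) (hd : ∑ j, d j * d j = 1)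

lemma n2_pos (hne : c ≠ d) : 0 < ∑ j, (c j - d j) * (c j - d j) := by
  rcases lt_or_eq_of_le (Finset.sum_nonneg
    (fun j _ => mul_self_nonneg (c j - d j))) with h | h
  · exact h
  · exfalso
    apply hne
    funext j
    have := (Finset.sum_eq_zero_iff_of_nonneg
      (fun j _ => mul_self_nonneg (c j - d j))).mp h.symm j (Finset.mem_univ j)
    have := mul_self_eq_zero.mp this
    linarith

include hc hd in
lemma sum_sub_mul_c : (∑ j, (c j - d j) * c j)
    = (∑ j, (c j - d j) * (c j - d j)) / 2 := by
  have e1 : ∀ j : Fin s, (c j - d j) * (c j - d j)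
      = c j * c j - 2 * (c j * d j) + d j * d j := fun j => by ring
  have e2 : ∀ j : Fin s, (c j - d j) * c j = c j * c j - c j * d j := fun j => by ring
  rw [Finset.sum_congr rfl (fun j _ => e1 j), Finset.sum_congr rfl (fun j _ => e2 j)]
  rw [Finset.sum_add_distrib, Finset.sum_sub_distrib, Finset.sum_sub_distrib,
    ← Finset.mul_sum, hc, hd]
  ring

lemma Dm_mulVec :
    (Matrix.of (fun j j' => (c j - d j) * (c j' - d j'))) *ᵥ c
      = (∑ j', (c j' - d j') * c j') • (fun j => c j - d j) := by
  funext j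
  rw [Matrix.mulVec]
  show (∑ j', (c j - d j) * (c j' - d j') * c j') = _
  simp only [Pi.smul_apply, smul_eq_mul]
  have e : ∀ j' : Fin s, (c j - d j) * (c j' - d j') * c j'
      = ((c j' - d j') * c j') * (c j - d j) := fun j' => by ring
  rw [Finset.sum_congr rfl (fun j' _ => e j'), ← Finset.sum_mul]

lemma Dm_mul_Dm :
    (Matrix.of (fun j j' => (c j - d j) * (c j' - d j')) :
        Matrix (Fin s) (Fin s) ℝ) * Matrix.of (fun j j' => (c j - d j) * (c j' - d j'))
      = (∑ k, (c k - d k) * (c k - d k)) •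
          Matrix.of (fun j j' => (c j - d j) * (c j' - d j')) := by
  ext j j'
  rw [Matrix.mul_apply]
  simp only [Matrix.of_apply, Matrix.smul_apply, smul_eq_mul]
  have : ∀ k : Fin s, (c j - d j) * (c k - d k) * ((c k - d k) * (c j' - d j'))
      = ((c k - d k) * (c k - d k)) * ((c j - d j) * (c j' - d j')) := fun k => by ring
  rw [Finset.sum_congr rfl (fun k _ => this k), ← Finset.sum_mul]

include hc hd in
lemma Qm_mulVec : Qm c d *ᵥ c = d := by
  unfold Qm
  split_ifs with h
  · rw [Matrix.one_mulVec, h]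
  · set n2 := ∑ k, (c k - d k) * (c k - d k) with hn2def
    have hn2 : n2 ≠ 0 := ne_of_gt (n2_pos h)
    rw [Matrix.sub_mulVec, Matrix.one_mulVec, Matrix.smul_mulVec,
      Dm_mulVec, sum_sub_mul_c hc hd, smul_smul, ← hn2def]
    have : 2 / n2 * (n2 / 2) = 1 := by field_simp
    rw [this, one_smul]
    funext j
    simp

include hc hd in
lemma Qm_mul_self : Qm c d * Qm c d = 1 := by
  unfold Qm
  split_ifs with h
  · exact Matrix.one_mul 1
  · set n2 := ∑ k, (c k - d k) * (c k - d k) with hn2def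
    have hn2 : n2 ≠ 0 := ne_of_gt (n2_pos h)
    set D := (Matrix.of (fun j j' => (c j - d j) * (c j' - d j')) :
      Matrix (Fin s) (Fin s) ℝ) with hD
    set t := 2 / n2 with ht
    have hDD : D * D = n2 • D := Dm_mul_Dm
    have hMM : (t • D) * (t • D) = (t * (t * n2)) • D := by
      rw [Matrix.smul_mul, Matrix.mul_smul, hDD, smul_smul, smul_smul, mul_assoc]
    rw [Matrix.mul_sub, Matrix.mul_one, Matrix.sub_mul, Matrix.one_mul, hMM]
    have h2t : t * (t * n2) = t + t := by
      rw [ht]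
      field_simp
      ring
    rw [h2t, add_smul]
    abel

include hc hd in
lemma Qm_mulVec' : Qm c d *ᵥ d = c := by
  have h1 := Qm_mulVec hc hd
  calc Qm c d *ᵥ d = Qm c d *ᵥ (Qm c d *ᵥ c) := by rw [h1]
    _ = (Qm c d * Qm c d) *ᵥ c := by rw [Matrix.mulVec_mulVec]
    _ = c := by rw [Qm_mul_self hc hd, Matrix.one_mulVec]

end QmFacts

/-! ### inner products and orthonormal column families -/

lemma inner_eq_sum (x y : EuclideanSpace ℝ (Fin r)) :
    (inner ℝ x y : ℝ) = ∑ i, x i * y i := by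
  simp [PiLp.inner_apply, RCLike.inner_apply, mul_comm]

def colE (M : Matrix (Fin r) (Fin s) ℝ) (j : Fin s) : EuclideanSpace ℝ (Fin r) :=
  WithLp.toLp 2 (fun i => M i j)

lemma orthonormal_colE (M : Matrix (Fin r) (Fin s) ℝ) (h : Mᵀ * M = 1) :
    Orthonormal ℝ (colE M) := by
  rw [orthonormal_iff_ite]
  intro j j'
  rw [inner_eq_sum]
  have : (∑ i, colE M j i * colE M j' i) = (Mᵀ * M) j j' := by
    rw [Matrix.mul_apply]
    rfl
  rw [this, h, Matrix.one_apply]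

lemma obasis_inner_sum' (b : OrthonormalBasis (Fin r) ℝ (EuclideanSpace ℝ (Fin r)))
    (k l : Fin r) :
    (∑ i, b k i * b l i) = if k = l then (1 : ℝ) else 0 := by
  rw [← inner_eq_sum]
  exact orthonormal_iff_ite.mp b.orthonormal k l

lemma obasis_sum_mul (b : OrthonormalBasis (Fin r) ℝ (EuclideanSpace ℝ (Fin r)))
    (i i' : Fin r) :
    (∑ k, b k i * b k i') = if i = i' then (1 : ℝ) else 0 := by
  have h1 : (Matrix.of (fun k i => b k i) : Matrix (Fin r) (Fin r) ℝ)
      * (Matrix.of (fun k i => b k i) : Matrix (Fin r) (Fin r) ℝ)ᵀ = 1 := by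
    ext k l
    rw [Matrix.mul_apply]
    simp only [Matrix.of_apply, Matrix.transpose_apply]
    rw [obasis_inner_sum' b k l, Matrix.one_apply]
  have h2 := mul_eq_one_comm.mp h1
  have h3 := congrFun (congrFun (congrArg (fun M => (M : Matrix (Fin r) (Fin r) ℝ)) h2) i) i'
  simp only [Matrix.mul_apply, Matrix.of_apply, Matrix.transpose_apply] at h3
  rw [h3, Matrix.one_apply]

lemma obasis_inner_sum (b : OrthonormalBasis (Fin r) ℝ (EuclideanSpace ℝ (Fin r)))
    (k l : Fin r) :
    (∑ i, b k i * b l i) = if k = l then (1 : ℝ) else 0 := by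
  rw [← inner_eq_sum]
  exact orthonormal_iff_ite.mp b.orthonormal k l

/-- extend an orthonormal family to an orthonormal basis -/
lemma exists_obasis_extending (hsr : s ≤ r) (u : Fin s → EuclideanSpace ℝ (Fin r))
    (hu : Orthonormal ℝ u) :
    ∃ b : OrthonormalBasis (Fin r) ℝ (EuclideanSpace ℝ (Fin r)),
      ∀ j : Fin s, b (Fin.castLE hsr j) = u j := by
  classical
  set S : Set (Fin r) := {i : Fin r | (i : ℕ) < s} with hS
  set v : Fin r → EuclideanSpace ℝ (Fin r) :=
    fun i => if h : (i : ℕ) < s then u ⟨i, h⟩ else 0 with hv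
  have hrest : S.restrict v = u ∘ (fun i : S => (⟨(i : Fin r), i.2⟩ : Fin s)) := by
    funext i
    show v (i : Fin r) = _
    exact dif_pos i.2
  have hinj : Function.Injective (fun i : S => (⟨(i : Fin r), i.2⟩ : Fin s)) := by
    intro a b hab
    have h1 : ((a : Fin r) : ℕ) = ((b : Fin r) : ℕ) := by
      have := congrArg Fin.val hab
      simpa using this
    exact Subtype.ext (Fin.ext h1)
  have hv_on : Orthonormal ℝ (S.restrict v) := by
    rw [hrest]
    exact hu.comp _ hinj
  obtain ⟨b, hb⟩ := hv_on.exists_orthonormalBasis_extension_of_card_eq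
    (by simp) 
  refine ⟨b, fun j => ?_⟩
  have hmem : (Fin.castLE hsr j) ∈ S := by
    simp only [hS, Set.mem_setOf_eq, Fin.coe_castLE]
    exact j.2
  have hval : ((Fin.castLE hsr j : Fin r) : ℕ) < s := j.2
  calc b (Fin.castLE hsr j) = v (Fin.castLE hsr j) := hb _ hmem
    _ = u ⟨((Fin.castLE hsr j : Fin r) : ℕ), hval⟩ := by exact dif_pos hval
    _ = u j := congrArg u (Fin.ext rfl)

/-- the orthogonal matrix carrying one orthonormal column family to another -/
lemma exists_Pmat (hsr : s ≤ r) (M N : Matrix (Fin r) (Fin s) ℝ)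
    (hM : Mᵀ * M = 1) (hN : Nᵀ * N = 1) :
    ∃ P : Matrix (Fin r) (Fin r) ℝ, Pᵀ * P = 1 ∧ P * M = N := by
  obtain ⟨bA, hbA⟩ := exists_obasis_extending hsr (colE M) (orthonormal_colE M hM)
  obtain ⟨bB, hbB⟩ := exists_obasis_extending hsr (colE N) (orthonormal_colE N hN)
  refine ⟨Matrix.of (fun i i' => ∑ k, bB k i * bA k i'), ?_, ?_⟩
  · ext i i'
    rw [Matrix.mul_apply]
    simp only [Matrix.transpose_apply, Matrix.of_apply]
    have step1 : ∀ i'' : Fin r,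
        (∑ k, bB k i'' * bA k i) * (∑ l, bB l i'' * bA l i')
        = ∑ k, ∑ l, (bA k i * bA l i') * (bB k i'' * bB l i'') := by
      intro i''
      rw [Finset.sum_mul_sum]
      apply Finset.sum_congr rfl; intro k _
      apply Finset.sum_congr rfl; intro l _
      ring
    rw [Finset.sum_congr rfl (fun i'' _ => step1 i'')]
    rw [Finset.sum_comm]
    have step2 : ∀ k : Fin r,
        (∑ i'' : Fin r, ∑ l, (bA k i * bA l i') * (bB k i'' * bB l i''))
        = bA k i * bA k i' := by
      intro k
      rw [Finset.sum_comm]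
      have : ∀ l, (∑ i'' : Fin r, (bA k i * bA l i') * (bB k i'' * bB l i''))
          = (bA k i * bA l i') * (if k = l then (1:ℝ) else 0) := by
        intro l
        rw [← Finset.mul_sum, obasis_inner_sum]
      rw [Finset.sum_congr rfl (fun l _ => this l)]
      rw [Finset.sum_eq_single k]
      · simp
      · intro l _ hlk
        rw [if_neg (Ne.symm hlk), mul_zero]
      · simp
    rw [Finset.sum_congr rfl (fun k _ => step2 k)]
    rw [obasis_sum_mul bA i i', Matrix.one_apply]
  · ext i j
    rw [Matrix.mul_apply]
    simp only [Matrix.of_apply]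
    have step1 : ∀ i' : Fin r, (∑ k, bB k i * bA k i') * M i' j
        = ∑ k, bB k i * (bA k i' * colE M j i') := by
      intro i'
      rw [Finset.sum_mul]
      apply Finset.sum_congr rfl; intro k _
      show bB k i * bA k i' * M i' j = _
      rw [colE]
      ring
    rw [Finset.sum_congr rfl (fun i' _ => step1 i')]
    rw [Finset.sum_comm]
    have step2 : ∀ k : Fin r, (∑ i' : Fin r, bB k i * (bA k i' * colE M j i'))
        = bB k i * (if k = Fin.castLE hsr j then (1:ℝ) else 0) := by
      intro k
      rw [← Finset.mul_sum]
      congr 1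
      have : colE M j = bA (Fin.castLE hsr j) := (hbA j).symm
      rw [this, obasis_inner_sum]
    rw [Finset.sum_congr rfl (fun k _ => step2 k)]
    rw [Finset.sum_eq_single (Fin.castLE hsr j)]
    · rw [if_pos rfl, mul_one, hbB j]
      rfl
    · intro l _ hlk
      rw [if_neg hlk, mul_zero]
    · simp

/-! ### entries of the standard Laplacian of a fuzzy bipartite graph -/

section LapEntries

variable {p : ℕ} {X : Fin s → ℕ}

lemma lap_xx (i i' : Fin p) :
    stdLap (fuzzyBip p r s X) (.inl i) (.inl i') = if i = i' then 1 else 0 := by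
  by_cases h : i = i'
  · subst h; simp [stdLap]
  · rw [stdLap, if_neg (by simp [h]), if_neg (by simp [fuzzyBip]), if_neg h]

lemma lap_xu (h1 : ∀ j, 1 ≤ X j) (hr : ∑ j, X j = r) (i : Fin p) (i' : Fin r) :
    stdLap (fuzzyBip p r s X) (.inl i) (.inr (.inl i'))
      = -(1 / Real.sqrt ((r : ℝ) * ((p : ℝ) + 1))) := by
  rw [stdLap, if_neg (by simp), if_pos (by simp [fuzzyBip])]
  rw [deg_x, deg_u h1 hr]
  push_cast
  ring_nf

lemma lap_xw (i : Fin p) (j : Fin s) :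
    stdLap (fuzzyBip p r s X) (.inl i) (.inr (.inr j)) = 0 := by
  rw [stdLap, if_neg (by simp), if_neg (by simp [fuzzyBip])]

lemma lap_uu (i i' : Fin r) :
    stdLap (fuzzyBip p r s X) (.inr (.inl i)) (.inr (.inl i'))
      = if i = i' then 1 else 0 := by
  by_cases h : i = i'
  · subst h; simp [stdLap]
  · rw [stdLap, if_neg (by simp [h]), if_neg (by simp [fuzzyBip]), if_neg h]

lemma lap_ww (j j' : Fin s) :
    stdLap (fuzzyBip p r s X) (.inr (.inr j)) (.inr (.inr j'))
      = if j = j' then 1 else 0 := by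
  by_cases h : j = j'
  · subst h; simp [stdLap]
  · rw [stdLap, if_neg (by simp [h]), if_neg (by simp [fuzzyBip]), if_neg h]

lemma lap_uw (h1 : ∀ j, 1 ≤ X j) (hr : ∑ j, X j = r) (i : Fin r) (j : Fin s) :
    stdLap (fuzzyBip p r s X) (.inr (.inl i)) (.inr (.inr j))
      = -((Real.sqrt ((p : ℝ) + 1))⁻¹ * Vm r X i j) := by
  by_cases hb : blkP X i j
  · rw [stdLap, if_neg (by simp), if_pos ((adj_iff p r s X i j).mpr hb)]
    rw [deg_u h1 hr, deg_w hr, Vm, if_pos hb]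
    rw [one_div]
    congr 1
    rw [show (((p + 1 : ℕ)) : ℝ) = (p : ℝ) + 1 by push_cast; ring]
    rw [Real.sqrt_mul (by positivity), mul_inv]
  · rw [stdLap, if_neg (by simp), if_neg (fun hadj => hb ((adj_iff p r s X i j).mp hadj))]
    rw [Vm, if_neg hb, mul_zero, neg_zero]

lemma stdLap_symm' {V : Type*} [Fintype V] (G : SimpleGraph V) (u v : V) :
    stdLap G u v = stdLap G v u := by
  by_cases h : u = v
  · subst h; rfl
  · rw [stdLap, stdLap, if_neg h, if_neg (Ne.symm h)]
    by_cases ha : G.Adj u v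
    · rw [if_pos ha, if_pos ha.symm, mul_comm]
    · rw [if_neg ha, if_neg (fun h' => ha h'.symm)]

lemma lap_ux (h1 : ∀ j, 1 ≤ X j) (hr : ∑ j, X j = r) (i : Fin r) (i' : Fin p) :
    stdLap (fuzzyBip p r s X) (.inr (.inl i)) (.inl i')
      = -(1 / Real.sqrt ((r : ℝ) * ((p : ℝ) + 1))) := by
  rw [stdLap_symm', lap_xu h1 hr]

lemma lap_wx (i : Fin p) (j : Fin s) :
    stdLap (fuzzyBip p r s X) (.inr (.inr j)) (.inl i) = 0 := by
  rw [stdLap_symm', lap_xw]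

lemma lap_wu (h1 : ∀ j, 1 ≤ X j) (hr : ∑ j, X j = r) (i : Fin r) (j : Fin s) :
    stdLap (fuzzyBip p r s X) (.inr (.inr j)) (.inr (.inl i))
      = -((Real.sqrt ((p : ℝ) + 1))⁻¹ * Vm r X i j) := by
  rw [stdLap_symm', lap_uw h1 hr]

end LapEntries

/-! ### the conjugating matrix -/

def Om {p r s : ℕ} (P : Matrix (Fin r) (Fin r) ℝ) (Q : Matrix (Fin s) (Fin s) ℝ) :
    Matrix (Fin p ⊕ Fin r ⊕ Fin s) (Fin p ⊕ Fin r ⊕ Fin s) ℝ :=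
  fun x y => match x, y with
  | .inl i, .inl i' => if i = i' then 1 else 0
  | .inr (.inl i), .inr (.inl i') => P i i'
  | .inr (.inr j), .inr (.inr j') => Q j j'
  | _, _ => 0

lemma Om_orth {p : ℕ} (P : Matrix (Fin r) (Fin r) ℝ) (Q : Matrix (Fin s) (Fin s) ℝ)
    (hP : Pᵀ * P = 1) (hQ : Qᵀ * Q = 1) :
    (Om (p := p) P Q)ᵀ * Om P Q = 1 := by
  have hPe : ∀ i i', (∑ u, P u i * P u i') = if i = i' then (1:ℝ) else 0 := by
    intro i i'
    have := congrFun (congrFun hP i) i'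
    rw [Matrix.mul_apply] at this
    simp only [Matrix.transpose_apply] at this
    rw [this, Matrix.one_apply]
  have hQe : ∀ j j', (∑ u, Q u j * Q u j') = if j = j' then (1:ℝ) else 0 := by
    intro j j'
    have := congrFun (congrFun hQ j) j'
    rw [Matrix.mul_apply] at this
    simp only [Matrix.transpose_apply] at this
    rw [this, Matrix.one_apply]
  ext x y
  rw [Matrix.mul_apply, Fintype.sum_sum_type, Fintype.sum_sum_type]
  rcases x with i | i | j <;> rcases y with i' | i' | j' <;>
    simp only [Om, Matrix.transpose_apply, mul_zero, zero_mul, mul_one, one_mul,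
      Finset.sum_const_zero, add_zero, zero_add, Matrix.one_apply, Sum.inl.injEq,
      Sum.inr.injEq, ite_mul, zero_mul, one_mul]
  all_goals first
    | rfl
    | (rw [Finset.sum_ite_eq']; simp)
    | (rw [hPe])
    | (rw [hQe])
    | simp

lemma conj_lap {p : ℕ} (A B : Fin s → ℕ)
    (hA1 : ∀ j, 1 ≤ A j) (hB1 : ∀ j, 1 ≤ B j)
    (hAr : ∑ j, A j = r) (hBr : ∑ j, B j = r)
    (P : Matrix (Fin r) (Fin r) ℝ) (Q : Matrix (Fin s) (Fin s) ℝ)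
    (hProw : ∀ i, (∑ i', P i i') = 1)
    (hPcol : ∀ i', (∑ i, P i i') = 1)
    (hPV : P * Vm r A = Vm r B * Q)
    (hQV : Q * (Vm r A)ᵀ = (Vm r B)ᵀ * P) :
    Om (p := p) P Q * stdLap (fuzzyBip p r s A)
      = stdLap (fuzzyBip p r s B) * Om (p := p) P Q := by
  ext x y
  rw [Matrix.mul_apply, Matrix.mul_apply, Fintype.sum_sum_type, Fintype.sum_sum_type,
    Fintype.sum_sum_type, Fintype.sum_sum_type]
  rcases x with i | i | j <;> rcases y with i' | i' | j' <;>
    simp only [Om, lap_xx, lap_xw, lap_wx, lap_uu, lap_ww,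
      lap_xu hA1 hAr, lap_xu hB1 hBr, lap_ux hA1 hAr, lap_ux hB1 hBr,
      lap_uw hA1 hAr, lap_uw hB1 hBr, lap_wu hA1 hAr, lap_wu hB1 hBr,
      mul_zero, zero_mul, Finset.sum_const_zero, add_zero, zero_add,
      ite_mul, mul_ite, one_mul, mul_one, Finset.sum_ite_eq, Finset.sum_ite_eq',
      Finset.mem_univ, if_true]
  -- remaining nontrivial cases
  · -- (x, u) : column sums of P
    rw [← Finset.mul_sum, hPcol, mul_one]
  · -- (u, x) : row sums of P
    rw [← Finset.sum_mul, hProw, one_mul]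
  · -- (u, w) : P * V_A = V_B * Q
    have hL : (∑ u, P i u * -((Real.sqrt ((p : ℝ) + 1))⁻¹ * Vm r A u j'))
        = -((Real.sqrt ((p : ℝ) + 1))⁻¹ * (P * Vm r A) i j') := by
      rw [Matrix.mul_apply, Finset.mul_sum, ← Finset.sum_neg_distrib]
      exact Finset.sum_congr rfl (fun u _ => by ring)
    have hR : (∑ w, -((Real.sqrt ((p : ℝ) + 1))⁻¹ * Vm r B i w) * Q w j')
        = -((Real.sqrt ((p : ℝ) + 1))⁻¹ * (Vm r B * Q) i j') := by
      rw [Matrix.mul_apply, Finset.mul_sum, ← Finset.sum_neg_distrib]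
      exact Finset.sum_congr rfl (fun w _ => by ring)
    rw [hL, hR, hPV]
  · -- (w, u) : Q * V_Aᵀ = V_Bᵀ * P
    have hL : (∑ j'', Q j j'' * -((Real.sqrt ((p : ℝ) + 1))⁻¹ * Vm r A i' j''))
        = -((Real.sqrt ((p : ℝ) + 1))⁻¹ * (Q * (Vm r A)ᵀ) j i') := by
      rw [Matrix.mul_apply, Finset.mul_sum, ← Finset.sum_neg_distrib]
      refine Finset.sum_congr rfl (fun j'' _ => ?_)
      rw [Matrix.transpose_apply]
      ring
    have hR : (∑ u, -((Real.sqrt ((p : ℝ) + 1))⁻¹ * Vm r B u j) * P u i')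
        = -((Real.sqrt ((p : ℝ) + 1))⁻¹ * ((Vm r B)ᵀ * P) j i') := by
      rw [Matrix.mul_apply, Finset.mul_sum, ← Finset.sum_neg_distrib]
      refine Finset.sum_congr rfl (fun u _ => ?_)
      rw [Matrix.transpose_apply]
      ring
    rw [hL, hR, hQV]

open Polynomial in
lemma charpoly_conj_orth {n : Type*} [Fintype n] [DecidableEq n]
    (O M : Matrix n n ℝ) (hO : O * Oᵀ = 1) :
    (O * M * Oᵀ).charpoly = M.charpoly := by
  have hO' : Oᵀ * O = 1 := mul_eq_one_comm.mp hO
  have hmap : (O.map (C : ℝ → ℝ[X])) * (Oᵀ.map (C : ℝ → ℝ[X])) = 1 := by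
    rw [← Matrix.map_mul, hO]
    simp
  have hmap' : (Oᵀ.map (C : ℝ → ℝ[X])) * (O.map (C : ℝ → ℝ[X])) = 1 := by
    rw [← Matrix.map_mul, hO']
    simp
  have key : Matrix.charmatrix (O * M * Oᵀ)
      = O.map (C : ℝ → ℝ[X]) * Matrix.charmatrix M * Oᵀ.map (C : ℝ → ℝ[X]) := by
    unfold Matrix.charmatrix
    rw [Matrix.mul_sub, Matrix.sub_mul]
    congr 1
    · -- scalar part
      have h1 : (O.map (C : ℝ → ℝ[X])) * Matrix.scalar n (X : ℝ[X])
          = Matrix.scalar n (X : ℝ[X]) * (O.map (C : ℝ → ℝ[X])) :=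
        (Matrix.scalar_commute (X : ℝ[X]) (fun r' => Commute.all _ _) _).symm
      rw [h1, Matrix.mul_assoc, hmap, Matrix.mul_one]
    · simp only [RingHom.mapMatrix_apply]
      rw [← Matrix.map_mul, ← Matrix.map_mul]
  rw [Matrix.charpoly, key, Matrix.det_mul, Matrix.det_mul, Matrix.charpoly]
  have : (O.map (C : ℝ → ℝ[X])).det * ((Oᵀ.map (C : ℝ → ℝ[X])).det) = 1 := by
    rw [← Matrix.det_mul, hmap, Matrix.det_one]
  calc (O.map (C : ℝ → ℝ[X])).det * (Matrix.charmatrix M).det * (Oᵀ.map (C : ℝ → ℝ[X])).det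
      = (Matrix.charmatrix M).det * ((O.map (C : ℝ → ℝ[X])).det * (Oᵀ.map (C : ℝ → ℝ[X])).det) := by ring
    _ = (Matrix.charmatrix M).det := by rw [this, mul_one]


end Fuzzy

open Matrix in
set_option maxHeartbeats 1600000 in
/-- fuzzy complete bipartite graphs over two `s`-partitions of
`r` which differ as multisets are isospectral for the standard Laplacian and
non-isomorphic. -/
theorem stmt_14 (p r s : ℕ) (hp : 1 ≤ p) (hr : 4 ≤ r) (hs : 2 ≤ s) (hsr : s ≤ r - 1)
    (A B : Fin s → ℕ)
    (hA1 : ∀ j, 1 ≤ A j) (hB1 : ∀ j, 1 ≤ B j)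
    (hAr : ∑ j, A j = r) (hBr : ∑ j, B j = r)
    (hAB : (Finset.univ.val.map A : Multiset ℕ) ≠ Finset.univ.val.map B) :
    spec (fuzzyBip p r s A) = spec (fuzzyBip p r s B) ∧
    IsEmpty (fuzzyBip p r s A ≃g fuzzyBip p r s B) := by
  refine ⟨?_, Fuzzy.not_iso A B hA1 hB1 hAr hBr hAB⟩
  have hr0 : 0 < r := by omega
  have hsle : s ≤ r := by omega
  have hcA := Fuzzy.sum_cv_sq A hAr hr0
  have hcB := Fuzzy.sum_cv_sq B hBr hr0
  set Q := Fuzzy.Qm (Fuzzy.cv r A) (Fuzzy.cv r B) with hQdef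
  have hQQ : Q * Q = 1 := Fuzzy.Qm_mul_self hcA hcB
  have hQsym : Qᵀ = Q := Fuzzy.Qm_symm _ _
  have hQtQ : Qᵀ * Q = 1 := by rw [hQsym]; exact hQQ
  have hVA := Fuzzy.Vm_transpose_mul_Vm A hA1 hAr
  have hVB := Fuzzy.Vm_transpose_mul_Vm B hB1 hBr
  have hN : (Fuzzy.Vm r B * Q)ᵀ * (Fuzzy.Vm r B * Q) = 1 := by
    rw [Matrix.transpose_mul, Matrix.mul_assoc, ← Matrix.mul_assoc (Fuzzy.Vm r B)ᵀ,
      hVB, Matrix.one_mul, hQtQ]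
  obtain ⟨P, hPtP, hPV⟩ := Fuzzy.exists_Pmat hsle (Fuzzy.Vm r A) (Fuzzy.Vm r B * Q) hVA hN
  have hPPt : P * Pᵀ = 1 := mul_eq_one_comm.mp hPtP
  have t1 : (Fuzzy.Vm r A)ᵀ * Pᵀ = Q * (Fuzzy.Vm r B)ᵀ := by
    have h := congrArg Matrix.transpose hPV
    rw [Matrix.transpose_mul, Matrix.transpose_mul, hQsym] at h
    exact h
  have t2 : (Fuzzy.Vm r A)ᵀ = Q * (Fuzzy.Vm r B)ᵀ * P := by
    calc (Fuzzy.Vm r A)ᵀ = (Fuzzy.Vm r A)ᵀ * (Pᵀ * P) := by rw [hPtP, Matrix.mul_one]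
      _ = ((Fuzzy.Vm r A)ᵀ * Pᵀ) * P := by rw [Matrix.mul_assoc]
      _ = (Q * (Fuzzy.Vm r B)ᵀ) * P := by rw [t1]
  have hQV : Q * (Fuzzy.Vm r A)ᵀ = (Fuzzy.Vm r B)ᵀ * P := by
    rw [t2, ← Matrix.mul_assoc, ← Matrix.mul_assoc, hQQ, Matrix.one_mul]
  have hVcA := Fuzzy.Vm_mulVec_cv A hA1 hAr
  have hVcB := Fuzzy.Vm_mulVec_cv B hB1 hBr
  have hQcA : Q *ᵥ Fuzzy.cv r A = Fuzzy.cv r B := Fuzzy.Qm_mulVec hcA hcB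
  have hsrne : Real.sqrt r ≠ 0 := ne_of_gt (Real.sqrt_pos.mpr (by exact_mod_cast hr0))
  have hones : (fun _ : Fin r => (1 : ℝ))
      = Real.sqrt r • (Fuzzy.Vm r A *ᵥ Fuzzy.cv r A) := by
    rw [hVcA]
    funext i
    simp only [Pi.smul_apply, smul_eq_mul]
    rw [mul_inv_cancel₀ hsrne]
  have hscale : Real.sqrt r • (fun _ : Fin r => (Real.sqrt r)⁻¹)
      = (fun _ : Fin r => (1 : ℝ)) := by
    funext i
    simp only [Pi.smul_apply, smul_eq_mul]
    rw [mul_inv_cancel₀ hsrne]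
  have hPones : P *ᵥ (fun _ : Fin r => (1 : ℝ)) = (fun _ => 1) := by
    conv_lhs => rw [hones]
    rw [Matrix.mulVec_smul, Matrix.mulVec_mulVec, hPV, ← Matrix.mulVec_mulVec,
      hQcA, hVcB, hscale]
  have hProw : ∀ i, (∑ i', P i i') = 1 := by
    intro i
    have := congrFun hPones i
    simpa [Matrix.mulVec, dotProduct] using this
  have hPtones : Pᵀ *ᵥ (fun _ : Fin r => (1 : ℝ)) = (fun _ => 1) := by
    conv_lhs => rw [← hPones]
    rw [Matrix.mulVec_mulVec, hPtP, Matrix.one_mulVec]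
  have hPcol : ∀ i', (∑ i, P i i') = 1 := by
    intro i'
    have := congrFun hPtones i'
    simpa [Matrix.mulVec, dotProduct, Matrix.transpose_apply] using this
  have hOL := Fuzzy.conj_lap (p := p) A B hA1 hB1 hAr hBr P Q hProw hPcol hPV hQV
  have hOtO := Fuzzy.Om_orth (p := p) P Q hPtP hQtQ
  have hOOt := mul_eq_one_comm.mp hOtO
  have hLB : Fuzzy.Om (p := p) P Q * stdLap (fuzzyBip p r s A) * (Fuzzy.Om (p := p) P Q)ᵀ
      = stdLap (fuzzyBip p r s B) := by
    rw [hOL, Matrix.mul_assoc, hOOt, Matrix.mul_one]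
  unfold spec
  have hcp := Fuzzy.charpoly_conj_orth (Fuzzy.Om (p := p) P Q)
    (stdLap (fuzzyBip p r s A)) hOOt
  rw [hLB] at hcp
  congr 1
  convert hcp.symm using 2
end
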